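/- arXiv:2309.06539 — 4 statements merged into one kernel-verified Lean document; each statement's English description precedes it below -/
import Mathlib

section
/- Let H and K be abelian groups (written additively), β : K → Aut(H) a homomorphism into the automorphism group of H, and G = H ⋊_β K the semidirect product, with multiplication (h,k)(h',k') = (h + β_k(h'), k + k'). Let ω : G × G → 𝕋 be a 2-cocycle (ω(g, g'g'')·ω(g', g'') = ω(gg', g'')·ω(g, g') for all g, g', g'' ∈ G) such that ω((h,0),(h',0)) = 1 for all h, h' ∈ H. For a character x : H → 𝕋 and k ∈ K define (k.x)(h) = conj(ω((0,−k),(0,k))) · ω((0,−k),(h,0)) · ω((β_{−k}(h),−k),(0,k)) · x(β_{−k}(h)). Then: (i) k.x is again a character of H (a group homomorphism H → 𝕋); (ii) 0.x = x; and (iii) (k+k').x = k.(k'.x) for all k, k' ∈ K. Hence this formula defines an action of K on the character group Ĥ = Hom(H, 𝕋). -/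
/-- Multiplication of the semidirect product `G = H ⋊_β K`:
`(h,k)(h',k') = (h + β_k(h'), k + k')`. -/
def sdMul {H K : Type*} [AddCommGroup H] [AddCommGroup K]
    (β : K → H ≃+ H) (g g' : H × K) : H × K :=
  (g.1 + β g.2 g'.1, g.2 + g'.2)

/-- The action of `k ∈ K` on a (function representing a) character `x` of `H`:
`(k.x)(h) = conj(ω((0,−k),(0,k))) · ω((0,−k),(h,0)) · ω((β_{−k}(h),−k),(0,k)) · x(β_{−k}(h))`,
where conjugation on the circle group is inversion. -/
noncomputable def charAct {H K : Type*} [AddCommGroup H] [AddCommGroup K]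
    (β : K → H ≃+ H) (ω : H × K → H × K → Circle) (k : K) (x : H → Circle) : H → Circle :=
  fun h =>
    (ω (0, -k) (0, k))⁻¹ * ω (0, -k) (h, 0) * ω (β (-k) h, -k) (0, k) * x (β (-k) h)

/-- Let `H, K` be abelian groups, `β : K → Aut(H)` a homomorphism, `G = H ⋊_β K`, and `ω` a
2-cocycle on `G` with `ω|_{H×H} ≡ 1`.  Then `(k, x) ↦ k.x` is an action of `K` on the character
group `Ĥ`: `k.x` is again a character, `0.x = x`, and `(k+k').x = k.(k'.x)`. -/
theorem charAct_is_action {H K : Type*} [AddCommGroup H] [AddCommGroup K]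
    (β : K → H ≃+ H)
    (hβ0 : ∀ h : H, β 0 h = h)
    (hβ : ∀ (k k' : K) (h : H), β (k + k') h = β k (β k' h))
    (ω : H × K → H × K → Circle)
    (hω : ∀ g g' g'' : H × K,
      ω g (sdMul β g' g'') * ω g' g'' = ω (sdMul β g g') g'' * ω g g')
    (hωH : ∀ h h' : H, ω (h, 0) (h', 0) = 1) :
    (∀ (k : K) (x : H → Circle), (∀ h h' : H, x (h + h') = x h * x h') →
        ∀ h h' : H, charAct β ω k x (h + h') = charAct β ω k x h * charAct β ω k x h') ∧
    (∀ x : H → Circle, (∀ h h' : H, x (h + h') = x h * x h') →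
        charAct β ω 0 x = x) ∧
    (∀ (k k' : K) (x : H → Circle), (∀ h h' : H, x (h + h') = x h * x h') →
        charAct β ω (k + k') x = charAct β ω k (charAct β ω k' x)) := by
  -- auxiliary facts
  have hβc : ∀ (k : K) (h : H), β k (β (-k) h) = h := by
    intro k h
    rw [← hβ, add_neg_cancel, hβ0]
  have hsd0 : ∀ g : H × K, sdMul β (0, 0) g = g := by
    intro g; simp [sdMul, hβ0]
  have hsd0' : ∀ g : H × K, sdMul β g (0, 0) = g := by
    intro g; simp [sdMul]
  have h00 : ω (0, 0) (0, 0) = 1 := hωH 0 0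
  have hone : ∀ g : H × K, ω (0, 0) g = 1 := by
    intro g
    have h := hω (0, 0) (0, 0) g
    rw [hsd0, hsd0] at h
    rw [mul_left_cancel h, h00]
  have honeR : ∀ g : H × K, ω g (0, 0) = 1 := by
    intro g
    have h := hω g (0, 0) (0, 0)
    rw [hsd0, hsd0', h00] at h
    exact (mul_left_cancel h).symm
  refine ⟨?_, ?_, ?_⟩
  · -- (i) `k.x` is a character
    intro k x hx h h'
    have E1 := hω (0, -k) (h, 0) (h', 0)
    simp only [sdMul, hβ0, hβ, hβc, map_zero, map_add, zero_add, add_zero, neg_add_cancel,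
      add_neg_cancel, neg_add_cancel_left, add_assoc, hωH, hone, one_mul, mul_one] at E1
    have E2 := hω (β (-k) h, -k) (h', 0) (0, k)
    simp only [sdMul, hβ0, hβ, hβc, map_zero, map_add, zero_add, add_zero, neg_add_cancel,
      add_neg_cancel, neg_add_cancel_left, add_assoc, hωH, hone, one_mul, mul_one] at E2
    have E3 := hω (β (-k) h, -k) (0, k) (β (-k) h', 0)
    simp only [sdMul, hβ0, hβ, hβc, map_zero, map_add, zero_add, add_zero, neg_add_cancel,
      add_neg_cancel, neg_add_cancel_left, add_assoc, hωH, hone, one_mul, mul_one] at E3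
    have E5 := hω (0, -k) (0, k) (β (-k) h', 0)
    simp only [sdMul, hβ0, hβ, hβc, map_zero, map_add, zero_add, add_zero, neg_add_cancel,
      add_neg_cancel, neg_add_cancel_left, add_assoc, hωH, hone, one_mul, mul_one] at E5
    have E6 := hω (0, -k) (h', 0) (0, k)
    simp only [sdMul, hβ0, hβ, hβc, map_zero, map_add, zero_add, add_zero, neg_add_cancel,
      add_neg_cancel, neg_add_cancel_left, add_assoc, hωH, hone, one_mul, mul_one] at E6
    simp only [charAct, map_add, hx]
    apply Circle.coe_injective
    push_cast
    have E1c : (ω (0, -k) (h + h', 0) : ℂ)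
        = (ω (β (-k) h, -k) (h', 0) : ℂ) * (ω (0, -k) (h, 0) : ℂ) := by exact_mod_cast congrArg (fun z : Circle => (z : ℂ)) E1
    have E2c : (ω (β (-k) h, -k) (h', k) : ℂ) * (ω (h', 0) (0, k) : ℂ)
        = (ω (β (-k) h + β (-k) h', -k) (0, k) : ℂ) * (ω (β (-k) h, -k) (h', 0) : ℂ) := by
      exact_mod_cast congrArg (fun z : Circle => (z : ℂ)) E2
    have E3c : (ω (β (-k) h, -k) (h', k) : ℂ) * (ω (0, k) (β (-k) h', 0) : ℂ)
        = (ω (β (-k) h, -k) (0, k) : ℂ) := by exact_mod_cast congrArg (fun z : Circle => (z : ℂ)) E3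
    have E5c : (ω (0, -k) (h', k) : ℂ) * (ω (0, k) (β (-k) h', 0) : ℂ)
        = (ω (0, -k) (0, k) : ℂ) := by exact_mod_cast congrArg (fun z : Circle => (z : ℂ)) E5
    have E6c : (ω (0, -k) (h', k) : ℂ) * (ω (h', 0) (0, k) : ℂ)
        = (ω (β (-k) h', -k) (0, k) : ℂ) * (ω (0, -k) (h', 0) : ℂ) := by exact_mod_cast congrArg (fun z : Circle => (z : ℂ)) E6
    have hA2 : (ω (β (-k) h + β (-k) h', -k) (0, k) : ℂ)
        = (ω (β (-k) h, -k) (h', k) : ℂ) * (ω (h', 0) (0, k) : ℂ)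
          / (ω (β (-k) h, -k) (h', 0) : ℂ) := by
      rw [eq_div_iff (Circle.coe_ne_zero _)]; exact E2c.symm
    have hC2 : (ω (β (-k) h', -k) (0, k) : ℂ)
        = (ω (0, -k) (h', k) : ℂ) * (ω (h', 0) (0, k) : ℂ) / (ω (0, -k) (h', 0) : ℂ) := by
      rw [eq_div_iff (Circle.coe_ne_zero _)]; exact E6c.symm
    rw [E1c, hA2, hC2, ← E3c, ← E5c]
    field_simp
  · -- (ii) `0.x = x`
    intro x hx
    funext h
    simp only [charAct, neg_zero, hβ0, hone, honeR, inv_one, one_mul, mul_one]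
  · -- (iii) `(k+k').x = k.(k'.x)`
    intro k k' x hx
    funext h
    have E1 := hω (0, -k') (0, -k) (h, 0)
    simp only [sdMul, hβ0, hβ, hβc, map_zero, map_add, zero_add, add_zero, neg_add_cancel,
      add_neg_cancel, neg_add_cancel_left, add_assoc, hωH, hone, one_mul, mul_one] at E1
    have E2 := hω (β (-k') (β (-k) h), -k' + -k) (0, k) (0, k')
    simp only [sdMul, hβ0, hβ, hβc, map_zero, map_add, zero_add, add_zero, neg_add_cancel,
      add_neg_cancel, neg_add_cancel_left, add_assoc, hωH, hone, one_mul, mul_one] at E2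
    have E3 := hω (0, -k') (β (-k) h, -k) (0, k)
    simp only [sdMul, hβ0, hβ, hβc, map_zero, map_add, zero_add, add_zero, neg_add_cancel,
      add_neg_cancel, neg_add_cancel_left, add_assoc, hωH, hone, one_mul, mul_one] at E3
    have E4 := hω (0, -k') (0, -k) (0, k + k')
    simp only [sdMul, hβ0, hβ, hβc, map_zero, map_add, zero_add, add_zero, neg_add_cancel,
      add_neg_cancel, neg_add_cancel_left, add_assoc, hωH, hone, one_mul, mul_one] at E4
    have E5 := hω (0, -k) (0, k) (0, k')
    simp only [sdMul, hβ0, hβ, hβc, map_zero, map_add, zero_add, add_zero, neg_add_cancel,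
      add_neg_cancel, neg_add_cancel_left, add_assoc, hωH, hone, one_mul, mul_one] at E5
    have hnk : -(k + k') = -k' + -k := by abel
    simp only [charAct, hnk, hβ]
    apply Circle.coe_injective
    push_cast
    have E1c : (ω (0, -k') (β (-k) h, -k) : ℂ) * (ω (0, -k) (h, 0) : ℂ)
        = (ω (0, -k' + -k) (h, 0) : ℂ) * (ω (0, -k') (0, -k) : ℂ) := by exact_mod_cast congrArg (fun z : Circle => (z : ℂ)) E1
    have E2c : (ω (β (-k') (β (-k) h), -k' + -k) (0, k + k') : ℂ) * (ω (0, k) (0, k') : ℂ)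
        = (ω (β (-k') (β (-k) h), -k') (0, k') : ℂ)
          * (ω (β (-k') (β (-k) h), -k' + -k) (0, k) : ℂ) := by exact_mod_cast congrArg (fun z : Circle => (z : ℂ)) E2
    have E3c : (ω (0, -k') (β (-k) h, 0) : ℂ) * (ω (β (-k) h, -k) (0, k) : ℂ)
        = (ω (β (-k') (β (-k) h), -k' + -k) (0, k) : ℂ)
          * (ω (0, -k') (β (-k) h, -k) : ℂ) := by exact_mod_cast congrArg (fun z : Circle => (z : ℂ)) E3
    have E4c : (ω (0, -k') (0, k') : ℂ) * (ω (0, -k) (0, k + k') : ℂ)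
        = (ω (0, -k' + -k) (0, k + k') : ℂ) * (ω (0, -k') (0, -k) : ℂ) := by exact_mod_cast congrArg (fun z : Circle => (z : ℂ)) E4
    have E5c : (ω (0, -k) (0, k + k') : ℂ) * (ω (0, k) (0, k') : ℂ)
        = (ω (0, -k) (0, k) : ℂ) := by exact_mod_cast congrArg (fun z : Circle => (z : ℂ)) E5
    have hW1 : (ω (0, -k' + -k) (h, 0) : ℂ)
        = (ω (0, -k') (β (-k) h, -k) : ℂ) * (ω (0, -k) (h, 0) : ℂ)
          / (ω (0, -k') (0, -k) : ℂ) := by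
      rw [eq_div_iff (Circle.coe_ne_zero _)]; exact E1c.symm
    have hW2 : (ω (β (-k') (β (-k) h), -k' + -k) (0, k + k') : ℂ)
        = (ω (β (-k') (β (-k) h), -k') (0, k') : ℂ)
          * (ω (β (-k') (β (-k) h), -k' + -k) (0, k) : ℂ) / (ω (0, k) (0, k') : ℂ) := by
      rw [eq_div_iff (Circle.coe_ne_zero _)]; exact E2c
    have hB2 : (ω (β (-k) h, -k) (0, k) : ℂ)
        = (ω (β (-k') (β (-k) h), -k' + -k) (0, k) : ℂ)
          * (ω (0, -k') (β (-k) h, -k) : ℂ) / (ω (0, -k') (β (-k) h, 0) : ℂ) := by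
      rw [eq_div_iff (Circle.coe_ne_zero _)]; linear_combination E3c
    have hW0 : (ω (0, -k' + -k) (0, k + k') : ℂ)
        = (ω (0, -k') (0, k') : ℂ) * (ω (0, -k) (0, k + k') : ℂ)
          / (ω (0, -k') (0, -k) : ℂ) := by
      rw [eq_div_iff (Circle.coe_ne_zero _)]; exact E4c.symm
    rw [hW0, hW1, hW2, hB2, ← E5c]
    field_simp
end

section
/- Assume the algebraic conditions of Assumption 5.1 (see context). Suppose γ', η' ∈ H satisfy s(γ') = r(η'). Then for every γ'' in the T-orbit [γ'] there exists a unique η'' in the T-orbit [η'] such that s(γ'') = r(η'') (i.e. (γ'', η'') is composable). -/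
universe u v w

/-- A groupoid, presented by its set `H` of arrows and its set `U` of units: range and source
maps `r, s : H → U`, a (totalized) partially-defined multiplication which is only meaningful on
composable pairs (`s g = r h`), inversion, and the embedding `unit : U → H` of units. -/
structure RawGroupoid (H : Type u) (U : Type v) where
  r : H → U
  s : H → U
  mul : H → H → H
  inv : H → H
  unit : U → H
  r_unit : ∀ x, r (unit x) = x
  s_unit : ∀ x, s (unit x) = x
  r_mul : ∀ g h, s g = r h → r (mul g h) = r g
  s_mul : ∀ g h, s g = r h → s (mul g h) = s h
  r_inv : ∀ g, r (inv g) = s g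
  s_inv : ∀ g, s (inv g) = r g
  inv_inv : ∀ g, inv (inv g) = g
  mul_assoc : ∀ g h k, s g = r h → s h = r k → mul (mul g h) k = mul g (mul h k)
  unit_mul : ∀ g, mul (unit (r g)) g = g
  mul_unit : ∀ g, mul g (unit (s g)) = g
  inv_mul : ∀ g, mul (inv g) g = unit (s g)
  mul_inv : ∀ g, mul g (inv g) = unit (r g)

/-- A bundle of abelian groups: a surjection `p : T → X` together with a fibrewise abelian
group structure (the multiplication is totalized; it is only meaningful within a fibre). -/
structure AbGroupBundle (T : Type u) (X : Type v) where
  p : T → X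
  p_surj : Function.Surjective p
  e : X → T
  bmul : T → T → T
  binv : T → T
  p_e : ∀ x, p (e x) = x
  p_bmul : ∀ s t, p s = p t → p (bmul s t) = p t
  p_binv : ∀ t, p (binv t) = p t
  bmul_assoc : ∀ s t u, p s = p t → p t = p u → bmul (bmul s t) u = bmul s (bmul t u)
  bmul_comm : ∀ s t, p s = p t → bmul s t = bmul t s
  e_bmul : ∀ t, bmul (e (p t)) t = t
  binv_bmul : ∀ t, bmul (binv t) t = e (p t)

/-- The algebraic conditions of Assumption 5.1: a groupoid `H` whose unit space `U = H⁰` is a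
bundle of abelian groups `p : U → X`, together with commuting free left and right actions
`▶ = actL` and `◀ = actR` of `U` on `H` along the moment maps `p∘r` and `p∘s` respectively, and
maps `λ = lam` and `ρ = rho` intertwining them, satisfying conditions (1a), (1b) and
(2a)–(2f). -/
structure Assumption51 (H : Type u) (U : Type v) (X : Type w) where
  gpd : RawGroupoid H U
  bund : AbGroupBundle U X
  actL : U → H → H
  actR : H → U → H
  lam : H → U → U
  rho : H → U → U
  -- `actL` is a left action of `T = U` on `H` along `p ∘ r`
  actL_id : ∀ γ, actL (bund.e (bund.p (gpd.r γ))) γ = γ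
  actL_mul : ∀ t t' γ, bund.p t = bund.p t' → bund.p t' = bund.p (gpd.r γ) →
    actL (bund.bmul t t') γ = actL t (actL t' γ)
  pr_actL : ∀ t γ, bund.p t = bund.p (gpd.r γ) → bund.p (gpd.r (actL t γ)) = bund.p t
  actL_free : ∀ t γ, bund.p t = bund.p (gpd.r γ) → actL t γ = γ →
    t = bund.e (bund.p (gpd.r γ))
  -- `actR` is a right action of `T = U` on `H` along `p ∘ s`
  actR_id : ∀ γ, actR γ (bund.e (bund.p (gpd.s γ))) = γ
  actR_mul : ∀ γ t t', bund.p t = bund.p (gpd.s γ) → bund.p t' = bund.p t →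
    actR γ (bund.bmul t t') = actR (actR γ t) t'
  ps_actR : ∀ γ t, bund.p t = bund.p (gpd.s γ) → bund.p (gpd.s (actR γ t)) = bund.p t
  actR_free : ∀ γ t, bund.p t = bund.p (gpd.s γ) → actR γ t = γ →
    t = bund.e (bund.p (gpd.s γ))
  -- the two actions commute
  act_comm : ∀ t γ t', bund.p t = bund.p (gpd.r γ) → bund.p t' = bund.p (gpd.s γ) →
    actR (actL t γ) t' = actL t (actR γ t')
  -- (1a): `t ▶ u = u ◀ t` for units `u`
  unit_act : ∀ u t, bund.p t = bund.p u → actL t (gpd.unit u) = actR (gpd.unit u) t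
  -- (1b): `r(t ▶ γ) = t ▶ r(γ)` and `s(η ◀ t) = s(η) ◀ t`
  r_actL : ∀ t γ, bund.p t = bund.p (gpd.r γ) →
    gpd.unit (gpd.r (actL t γ)) = actL t (gpd.unit (gpd.r γ))
  s_actR : ∀ γ t, bund.p t = bund.p (gpd.s γ) →
    gpd.unit (gpd.s (actR γ t)) = actR (gpd.unit (gpd.s γ)) t
  -- `λ_η : T_{p_s(η)} → T_{p_r(η)}` and `ρ_η : T_{p_r(η)} → T_{p_s(η)}`
  lam_p : ∀ η t, bund.p t = bund.p (gpd.s η) → bund.p (lam η t) = bund.p (gpd.r η)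
  rho_p : ∀ η t, bund.p t = bund.p (gpd.r η) → bund.p (rho η t) = bund.p (gpd.s η)
  -- (2a)–(2f)
  spec_a : ∀ η t, bund.p t = bund.p (gpd.s η) → actR η t = actL (lam η t) η
  spec_b : ∀ η t, bund.p t = bund.p (gpd.r η) → actL t η = actR η (rho η t)
  spec_c : ∀ γ η t, gpd.s γ = gpd.r η → bund.p t = bund.p (gpd.s η) →
    actR (gpd.mul γ η) t = gpd.mul (actR γ (lam η t)) (actR η t)
  spec_d : ∀ γ η t, gpd.s γ = gpd.r η → bund.p t = bund.p (gpd.r γ) →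
    actL t (gpd.mul γ η) = gpd.mul (actL t γ) (actL (rho γ t) η)
  spec_e : ∀ η t, bund.p t = bund.p (gpd.s η) → gpd.inv (actR η t) = actL t (gpd.inv η)
  spec_f : ∀ η t, bund.p t = bund.p (gpd.r η) → gpd.inv (actL t η) = actR (gpd.inv η) t

namespace Assumption51

variable {H : Type u} {U : Type v} {X : Type w} (A : Assumption51 H U X)

/-- The moment map `p ∘ r`. -/
def pr (γ : H) : X := A.bund.p (A.gpd.r γ)

/-- The moment map `p ∘ s`. -/
def ps (γ : H) : X := A.bund.p (A.gpd.s γ)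

/-- The orbit `[γ] = {γ ◀ t : t ∈ T_{p_s(γ)}}` of `γ` under the right `T`-action. -/
def orbit (γ : H) : Set H := {η | ∃ t : U, A.bund.p t = A.ps γ ∧ η = A.actR γ t}

/-- The orbit of `γ` under the left `T`-action. -/
def orbitL (γ : H) : Set H := {η | ∃ t : U, A.bund.p t = A.pr γ ∧ η = A.actL t γ}

/-- The product `[γ][η]` of two `T`-orbits: all products of composable representatives. -/
def classProd (γ η : H) : Set H :=
  {ξ | ∃ γ' ∈ A.orbit γ, ∃ η' ∈ A.orbit η, A.gpd.s γ' = A.gpd.r η' ∧ ξ = A.gpd.mul γ' η'}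

end Assumption51

theorem unit_inj {H : Type u} {U : Type v} (G : RawGroupoid H U) :
    Function.Injective G.unit := fun a b hab => by
  rw [← G.r_unit a, hab, G.r_unit]

/-- Strengthened freeness of the left action: it cancels. -/
theorem actL_cancel {H : Type u} {U : Type v} {X : Type w} (A : Assumption51 H U X)
    (s₁ s₂ : U) (γ : H) (h₁ : A.bund.p s₁ = A.bund.p (A.gpd.r γ))
    (h₂ : A.bund.p s₂ = A.bund.p (A.gpd.r γ)) (he : A.actL s₁ γ = A.actL s₂ γ) :
    s₁ = s₂ := by
  have hb : A.bund.p (A.bund.binv s₁) = A.bund.p s₁ := A.bund.p_binv s₁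
  have h12 : A.bund.p s₁ = A.bund.p s₂ := h₁.trans h₂.symm
  have step : A.actL (A.bund.bmul (A.bund.binv s₁) s₂) γ = γ := by
    rw [A.actL_mul _ _ _ (hb.trans h12) h₂, ← he, ← A.actL_mul _ _ _ hb h₁,
      A.bund.binv_bmul, h₁, A.actL_id]
  have hp : A.bund.p (A.bund.bmul (A.bund.binv s₁) s₂) = A.bund.p (A.gpd.r γ) := by
    rw [A.bund.p_bmul _ _ (hb.trans h12), h₂]
  have hfree := A.actL_free _ _ hp step
  have key : A.bund.bmul s₁ (A.bund.bmul (A.bund.binv s₁) s₂) = s₂ := by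
    rw [← A.bund.bmul_assoc _ _ _ hb.symm (hb.trans h12),
      A.bund.bmul_comm s₁ (A.bund.binv s₁) hb.symm, A.bund.binv_bmul, h12,
      A.bund.e_bmul]
  rw [hfree] at key
  rw [← key, A.bund.bmul_comm _ _ (by rw [A.bund.p_e, h₁]), ← h₁, A.bund.e_bmul]

/-- Lemma 5.5: under Assumption 5.1, if `γ', η' ∈ H` satisfy `s(γ') = r(η')`, then for every
`γ''` in the `T`-orbit `[γ']` there is a unique `η''` in the `T`-orbit `[η']` such that
`(γ'', η'')` is composable. -/
theorem lemma55 {H : Type u} {U : Type v} {X : Type w} (A : Assumption51 H U X)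
    (γ' η' : H) (h : A.gpd.s γ' = A.gpd.r η') :
    ∀ γ'' ∈ A.orbit γ',
      ∃! η'' : H, η'' ∈ A.orbit η' ∧ A.gpd.s γ'' = A.gpd.r η'' := by
  rintro γ'' ⟨t, ht, rfl⟩
  -- p t = p (r η')
  have htr : A.bund.p t = A.bund.p (A.gpd.r η') := by rw [ht, Assumption51.ps, h]
  have hts : A.bund.p t = A.bund.p (A.gpd.s γ') := ht
  -- the candidate
  have hmem : A.actL t η' ∈ A.orbit η' :=
    ⟨A.rho η' t, A.rho_p η' t htr, A.spec_b η' t htr⟩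
  have hcomp : A.gpd.s (A.actR γ' t) = A.gpd.r (A.actL t η') := by
    apply unit_inj A.gpd
    rw [A.s_actR γ' t hts, A.r_actL t η' htr, A.unit_act (A.gpd.r η') t htr, h]
  refine ⟨A.actL t η', ⟨hmem, hcomp⟩, ?_⟩
  rintro η'' ⟨⟨t₂, ht₂, rfl⟩, hc₂⟩
  have ht₂' : A.bund.p t₂ = A.bund.p (A.gpd.s η') := ht₂
  have hlam : A.bund.p (A.lam η' t₂) = A.bund.p (A.gpd.r η') := A.lam_p η' t₂ ht₂'
  have hspec : A.actR η' t₂ = A.actL (A.lam η' t₂) η' := A.spec_a η' t₂ ht₂'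
  -- r (actL (lam η' t₂) η') = r (actL t η')
  have hr : A.gpd.unit (A.gpd.r (A.actR η' t₂)) = A.gpd.unit (A.gpd.r (A.actL t η')) := by
    rw [← hc₂, hcomp]
  rw [hspec] at hr ⊢
  rw [A.r_actL _ η' hlam, A.r_actL t η' htr] at hr
  have := actL_cancel A (A.lam η' t₂) t (A.gpd.unit (A.gpd.r η'))
    (by rw [A.gpd.r_unit]; exact hlam) (by rw [A.gpd.r_unit]; exact htr) hr
  rw [this]
end

section
/- Assume the algebraic conditions of Assumption 5.1 (see context). Then H/T is a groupoid with composable pairs (H/T)² = {([γ],[η]) : there exist γ' ∈ [γ], η' ∈ [η] with s(γ') = r(η')}, composition and inversion given by: [γ][η] = {ξ : ξ = γ'η' for some γ' ∈ [γ], η' ∈ [η] with s(γ') = r(η')}, which is itself a single T-orbit (equal to [γ'η'] for any one choice of composable representatives, so composition is well defined and associative), and [γ]⁻¹ = [γ⁻¹] (well defined). Moreover, the range and source of H/T satisfy r([γ]) = [r(γ)] and s([γ]) = [s(γ)], and [γ][γ]⁻¹[γ] = [γ]. -/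
universe u v w

namespace Assumption51

variable {H : Type u} {U : Type v} {X : Type w} (A : Assumption51 H U X)

lemma unit_injective : Function.Injective A.gpd.unit := fun x y h => by
  rw [← A.gpd.r_unit x, h, A.gpd.r_unit]

lemma mem_orbit_self (γ : H) : γ ∈ A.orbit γ :=
  ⟨A.bund.e (A.ps γ), A.bund.p_e _, (A.actR_id γ).symm⟩

lemma ps_orbit {γ η : H} (h : η ∈ A.orbit γ) : A.ps η = A.ps γ := by
  obtain ⟨t, ht, rfl⟩ := h
  rw [ps, A.ps_actR γ t ht, ht]

lemma mem_orbit_trans {γ η ζ : H} (h1 : η ∈ A.orbit γ) (h2 : ζ ∈ A.orbit η) :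
    ζ ∈ A.orbit γ := by
  obtain ⟨t, ht, rfl⟩ := h1
  obtain ⟨u, hu, rfl⟩ := h2
  have hps : A.ps (A.actR γ t) = A.ps γ := A.ps_orbit ⟨t, ht, rfl⟩
  refine ⟨A.bund.bmul t u, ?_, ?_⟩
  · rw [A.bund.p_bmul t u (by rw [ht, hu, hps]), hu, hps]
  · rw [A.actR_mul γ t u ht (by rw [hu, hps, ht])]

lemma mem_orbit_symm {γ η : H} (h : η ∈ A.orbit γ) : γ ∈ A.orbit η := by
  obtain ⟨t, ht, rfl⟩ := h
  have hps : A.ps (A.actR γ t) = A.ps γ := A.ps_orbit ⟨t, ht, rfl⟩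
  have hbt : A.bund.p (A.bund.binv t) = A.bund.p t := A.bund.p_binv t
  refine ⟨A.bund.binv t, by rw [hbt, ht, hps], ?_⟩
  rw [← A.actR_mul γ t (A.bund.binv t) ht hbt,
    A.bund.bmul_comm t (A.bund.binv t) hbt.symm, A.bund.binv_bmul t, ht]
  exact (A.actR_id γ).symm

lemma orbit_eq_of_mem {γ η : H} (h : η ∈ A.orbit γ) : A.orbit η = A.orbit γ := by
  ext ζ
  exact ⟨fun hz => A.mem_orbit_trans h hz,
    fun hz => A.mem_orbit_trans (A.mem_orbit_symm h) hz⟩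

/-- Cancellation from freeness of the right action. -/
lemma actR_cancel {γ : H} {a c : U} (ha : A.bund.p a = A.ps γ)
    (hc : A.bund.p c = A.bund.p a) (h : A.actR γ a = A.actR γ c) : a = c := by
  have hba : A.bund.p (A.bund.binv a) = A.bund.p a := A.bund.p_binv a
  have hd : A.bund.p (A.bund.bmul (A.bund.binv a) c) = A.bund.p a := by
    rw [A.bund.p_bmul _ _ (by rw [hba, hc]), hc]
  have key : A.actR γ c = A.actR (A.actR γ a) (A.bund.bmul (A.bund.binv a) c) := by
    rw [← A.actR_mul γ a _ ha (by rw [hd]),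
      ← A.bund.bmul_assoc a (A.bund.binv a) c hba.symm (by rw [hba, hc]),
      A.bund.bmul_comm a (A.bund.binv a) hba.symm, A.bund.binv_bmul a, ← hc,
      A.bund.e_bmul c]
  have hfree := A.actR_free (A.actR γ a) (A.bund.bmul (A.bund.binv a) c)
    (by rw [hd, A.ps_actR γ a ha]) (by rw [← key, h])
  have hE : A.bund.bmul (A.bund.binv a) c = A.bund.e (A.bund.p a) := by
    rw [hfree, A.ps_actR γ a ha]
  have : A.bund.bmul a (A.bund.bmul (A.bund.binv a) c) = c := by
    rw [← A.bund.bmul_assoc a (A.bund.binv a) c hba.symm (by rw [hba, hc]),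
      A.bund.bmul_comm a (A.bund.binv a) hba.symm, A.bund.binv_bmul a, ← hc,
      A.bund.e_bmul c]
  rw [hE] at this
  rw [← this, A.bund.bmul_comm a _ (A.bund.p_e _).symm, A.bund.e_bmul a]

lemma p_lam {η : H} {t : U} (ht : A.bund.p t = A.ps η) :
    A.bund.p (A.lam η t) = A.bund.p (A.gpd.r η) := A.lam_p η t ht

/-- Composability of twisted representatives. -/
lemma comp_lemma {γ η : H} (h : A.gpd.s γ = A.gpd.r η) {t : U}
    (ht : A.bund.p t = A.ps η) :
    A.gpd.s (A.actR γ (A.lam η t)) = A.gpd.r (A.actR η t) := by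
  have hl : A.bund.p (A.lam η t) = A.bund.p (A.gpd.r η) := A.p_lam ht
  have hl' : A.bund.p (A.lam η t) = A.ps γ := by rw [hl, ps, h]
  apply A.unit_injective
  rw [A.s_actR γ (A.lam η t) hl', A.spec_a η t ht, A.r_actL (A.lam η t) η hl,
    A.unit_act (A.gpd.r η) (A.lam η t) hl, h]

/-- Key lemma: composable representatives multiply into the orbit of the product. -/
lemma key_lemma {γ η : H} (h : A.gpd.s γ = A.gpd.r η) {a b : U}
    (ha : A.bund.p a = A.ps γ) (hb : A.bund.p b = A.ps η)
    (hcomp : A.gpd.s (A.actR γ a) = A.gpd.r (A.actR η b)) :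
    A.gpd.mul (A.actR γ a) (A.actR η b) = A.actR (A.gpd.mul γ η) b := by
  have hl : A.bund.p (A.lam η b) = A.bund.p (A.gpd.r η) := A.p_lam hb
  have hl' : A.bund.p (A.lam η b) = A.ps γ := by rw [hl, ps, h]
  have halam : a = A.lam η b := by
    have h1 : A.gpd.s (A.actR γ (A.lam η b)) = A.gpd.r (A.actR η b) := A.comp_lemma h hb
    have h2 : A.actR (A.gpd.unit (A.gpd.s γ)) a = A.actR (A.gpd.unit (A.gpd.s γ)) (A.lam η b) := by
      rw [← A.s_actR γ a ha, ← A.s_actR γ (A.lam η b) hl', hcomp, h1]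
    have hsu : A.ps (A.gpd.unit (A.gpd.s γ)) = A.ps γ := by
      rw [ps, ps, A.gpd.s_unit]
    exact A.actR_cancel (γ := A.gpd.unit (A.gpd.s γ)) (by rw [hsu, ha])
      (by rw [hl', ha]) h2
  rw [halam, A.spec_c γ η b h hb]

lemma ps_mul {γ η : H} (h : A.gpd.s γ = A.gpd.r η) :
    A.ps (A.gpd.mul γ η) = A.ps η := by rw [ps, A.gpd.s_mul γ η h, ps]

/-- The product of composable classes is the orbit of the product of representatives. -/
lemma classProd_eq {γ η γ' η' : H} (hγ' : γ' ∈ A.orbit γ) (hη' : η' ∈ A.orbit η)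
    (hc : A.gpd.s γ' = A.gpd.r η') :
    A.classProd γ η = A.orbit (A.gpd.mul γ' η') := by
  ext ξ
  constructor
  · rintro ⟨γ'', hγ'', η'', hη'', hc'', rfl⟩
    have hγ2 : γ'' ∈ A.orbit γ' := (A.orbit_eq_of_mem hγ').symm ▸ hγ''
    have hη2 : η'' ∈ A.orbit η' := (A.orbit_eq_of_mem hη').symm ▸ hη''
    obtain ⟨a, ha, rfl⟩ := hγ2
    obtain ⟨b, hb, rfl⟩ := hη2
    refine ⟨b, ?_, A.key_lemma hc ha hb hc''⟩
    rw [hb, A.ps_mul hc]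
  · rintro ⟨t, ht, rfl⟩
    have ht' : A.bund.p t = A.ps η' := by rw [ht, A.ps_mul hc]
    have hl : A.bund.p (A.lam η' t) = A.ps γ' := by rw [A.p_lam ht', ← hc]; rfl
    refine ⟨A.actR γ' (A.lam η' t), A.mem_orbit_trans hγ' ⟨_, hl, rfl⟩,
      A.actR η' t, A.mem_orbit_trans hη' ⟨t, ht', rfl⟩, A.comp_lemma hc ht', ?_⟩
    rw [A.spec_c γ' η' t hc ht']

end Assumption51

/-- Proposition 5.6 (algebraic part): under Assumption 5.1, `H/T` is a groupoid.  The product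
`[γ][η]` of two composable classes is again a single `T`-orbit (namely `[γ'η']` for any choice
of composable representatives, so it is well defined), inversion `[γ]⁻¹ = [γ⁻¹]` is well
defined, composition is associative, and `r([γ]) = [r(γ)]`, `s([γ]) = [s(γ)]`, and
`[γ][γ]⁻¹[γ] = [γ]`. -/
theorem prop56 {H : Type u} {U : Type v} {X : Type w} (A : Assumption51 H U X) :
    -- the composition is well defined: `[γ][η] = [γ'η']` for composable representatives
    (∀ γ η γ' η', γ' ∈ A.orbit γ → η' ∈ A.orbit η → A.gpd.s γ' = A.gpd.r η' →
        A.classProd γ η = A.orbit (A.gpd.mul γ' η')) ∧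
    -- inversion is well defined: `[γ]⁻¹ = [γ⁻¹]`
    (∀ γ : H, A.gpd.inv '' A.orbit γ = A.orbit (A.gpd.inv γ)) ∧
    -- associativity
    (∀ γ η ζ, A.gpd.s γ = A.gpd.r η → A.gpd.s η = A.gpd.r ζ →
        A.classProd (A.gpd.mul γ η) ζ = A.classProd γ (A.gpd.mul η ζ)) ∧
    -- `r([γ]) = [γ][γ]⁻¹ = [r(γ)]` and `s([γ]) = [γ]⁻¹[γ] = [s(γ)]`
    (∀ γ : H, A.classProd γ (A.gpd.inv γ) = A.orbit (A.gpd.unit (A.gpd.r γ))) ∧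
    (∀ γ : H, A.classProd (A.gpd.inv γ) γ = A.orbit (A.gpd.unit (A.gpd.s γ))) ∧
    -- `[γ][γ]⁻¹[γ] = [γ]`
    (∀ γ : H, A.classProd (A.gpd.mul γ (A.gpd.inv γ)) γ = A.orbit γ) := by
  refine ⟨fun γ η γ' η' h1 h2 h3 => A.classProd_eq h1 h2 h3, ?_, ?_, ?_, ?_, ?_⟩
  · -- inversion
    intro γ
    ext ξ
    constructor
    · rintro ⟨x, ⟨t, ht, rfl⟩, rfl⟩
      have ht' : A.bund.p t = A.bund.p (A.gpd.s γ) := ht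
      refine ⟨A.rho (A.gpd.inv γ) t, ?_, ?_⟩
      · rw [Assumption51.ps, A.rho_p (A.gpd.inv γ) t (by rw [ht', A.gpd.r_inv])]
      · rw [A.spec_e γ t ht',
          A.spec_b (A.gpd.inv γ) t (by rw [ht', A.gpd.r_inv])]
    · rintro ⟨u, hu, rfl⟩
      have hu' : A.bund.p u = A.bund.p (A.gpd.r γ) := by
        rw [hu, Assumption51.ps, A.gpd.s_inv]
      refine ⟨A.actL u γ, ⟨A.rho γ u, ?_, A.spec_b γ u hu'⟩, ?_⟩
      · rw [A.rho_p γ u hu']; rfl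
      · rw [A.spec_f γ u hu']
  · -- associativity
    intro γ η ζ h1 h2
    have hgz : A.gpd.s (A.gpd.mul γ η) = A.gpd.r ζ := by rw [A.gpd.s_mul γ η h1, h2]
    have hgz' : A.gpd.s γ = A.gpd.r (A.gpd.mul η ζ) := by rw [A.gpd.r_mul η ζ h2, h1]
    rw [A.classProd_eq (A.mem_orbit_self _) (A.mem_orbit_self ζ) hgz,
      A.classProd_eq (A.mem_orbit_self γ) (A.mem_orbit_self _) hgz',
      A.gpd.mul_assoc γ η ζ h1 h2]
  · -- r
    intro γ
    rw [A.classProd_eq (A.mem_orbit_self γ) (A.mem_orbit_self (A.gpd.inv γ))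
      (A.gpd.r_inv γ).symm, A.gpd.mul_inv γ]
  · -- s
    intro γ
    rw [A.classProd_eq (A.mem_orbit_self (A.gpd.inv γ)) (A.mem_orbit_self γ)
      (A.gpd.s_inv γ), A.gpd.inv_mul γ]
  · -- γγ⁻¹γ = γ
    intro γ
    have hc : A.gpd.s (A.gpd.mul γ (A.gpd.inv γ)) = A.gpd.r γ := by
      rw [A.gpd.s_mul γ (A.gpd.inv γ) (A.gpd.r_inv γ).symm, A.gpd.s_inv]
    rw [A.classProd_eq (A.mem_orbit_self _) (A.mem_orbit_self γ) hc,
      A.gpd.mul_inv γ, A.gpd.unit_mul γ]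
end

section
/- Let G be a groupoid and S ⊆ Iso(G) a wide normal subgroupoid with abelian isotropy fibres S_u; let Ŝ_u = Hom(S_u, 𝕋), Ŝ = ⊔_u Ŝ_u, and let H = (G/S) ⋉ Ŝ be the action groupoid (see context). Then: (i) for γ ∈ G and t̂ ∈ Ŝ_{r(γ)}, the character Ad_γ(t̂) ∈ Ŝ_{s(γ)} defined by Ad_γ(t̂)(a) = t̂(γaγ⁻¹) depends only on the class [γ] ∈ G/S; in particular the action ([γ].x)(a) = x(γ⁻¹aγ) of G/S on Ŝ is well defined. (ii) The formulas t̂ ▶ ([γ], x) := ([γ], Ad_γ(t̂)·x) (for t̂ ∈ Ŝ_{r(γ)}) and ([γ], x) ◀ t̂ := ([γ], x·t̂) (for t̂ ∈ Ŝ_{s(γ)}) define a left action and a right action of the group bundle T := Ŝ = H⁰ on H along the moment maps p∘r and p∘s respectively; these actions commute and are free. (iii) With λ_{([γ],x)} := Ad_{γ⁻¹} and ρ_{([γ],x)} := Ad_γ, the following identities hold whenever defined: t▶u = u◀t for all units u of H; r(t▶η) = t▶r(η) and s(η◀t) = s(η)◀t; η◀t = λ_η(t)▶η; t▶η = η◀ρ_η(t);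 (γη)◀t = (γ◀λ_η(t))(η◀t); t▶(γη) = (t▶γ)(ρ_γ(t)▶η); (η◀t)⁻¹ = t▶η⁻¹; (t▶η)⁻¹ = η⁻¹◀t. That is, (H, T) satisfies the algebraic conditions of Assumption 5.1 of the paper. -/
universe u v w

section WeylConstruction

open scoped Classical

variable {Hm : Type u} {U : Type v}

/-- The class `[γ] = γS` of `γ` in `G/S`. -/
def cls (Gg : RawGroupoid Hm U) (S : Set Hm) (γ : Hm) : Set Hm :=
  {η | ∃ a ∈ S, Gg.s γ = Gg.r a ∧ η = Gg.mul γ a}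

/-- The isotropy fibre `S_u = {a ∈ S : r(a) = s(a) = u}`. -/
def sFib (Gg : RawGroupoid Hm U) (S : Set Hm) (u : U) : Set Hm :=
  {a | a ∈ S ∧ Gg.r a = u ∧ Gg.s a = u}

/-- `χ : Hm → Circle` represents a character of the abelian group `S_u`: it is multiplicative
on `S_u` and (as a normalization making the representation unique) equal to `1` off `S_u`. -/
def IsCharOn (Gg : RawGroupoid Hm U) (S : Set Hm) (u : U) (χ : Hm → Circle) : Prop :=
  (∀ a ∈ sFib Gg S u, ∀ b ∈ sFib Gg S u, χ (Gg.mul a b) = χ a * χ b) ∧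
    (∀ a, a ∉ sFib Gg S u → χ a = 1)

/-- The bundle `Ŝ = ⊔_u Ŝ_u` of character groups of the isotropy fibres of `S`. -/
def sHat (Gg : RawGroupoid Hm U) (S : Set Hm) : Type max u v :=
  {q : U × (Hm → Circle) // IsCharOn Gg S q.1 q.2}

lemma isCharOn_one (Gg : RawGroupoid Hm U) (S : Set Hm) (u : U) :
    IsCharOn Gg S u (fun _ => 1) :=
  ⟨fun _ _ _ _ => by simp, fun _ _ => rfl⟩

/-- The trivial character of `S_u` (the identity of `Ŝ_u`). -/
noncomputable def eChar (Gg : RawGroupoid Hm U) (S : Set Hm) (u : U) : sHat Gg S :=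
  ⟨(u, fun _ => 1), isCharOn_one Gg S u⟩

/-- The fibre map `p : Ŝ → G⁰`. -/
def pChar (Gg : RawGroupoid Hm U) (S : Set Hm) (x : sHat Gg S) : U := x.val.1

/-- Fibrewise (pointwise) multiplication of characters (junk if fibres differ). -/
noncomputable def mulChar (Gg : RawGroupoid Hm U) (S : Set Hm) (x y : sHat Gg S) :
    sHat Gg S :=
  if h : x.val.1 = y.val.1 ∧
      IsCharOn Gg S x.val.1
        (fun a => if a ∈ sFib Gg S x.val.1 then x.val.2 a * y.val.2 a else 1) then
    ⟨(x.val.1, fun a => if a ∈ sFib Gg S x.val.1 then x.val.2 a * y.val.2 a else 1), h.2⟩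
  else x

/-- Fibrewise (pointwise) inversion of characters. -/
noncomputable def invChar (Gg : RawGroupoid Hm U) (S : Set Hm) (x : sHat Gg S) : sHat Gg S :=
  if h : IsCharOn Gg S x.val.1
      (fun a => if a ∈ sFib Gg S x.val.1 then (x.val.2 a)⁻¹ else 1) then
    ⟨(x.val.1, fun a => if a ∈ sFib Gg S x.val.1 then (x.val.2 a)⁻¹ else 1), h⟩
  else x

/-- `Ad_γ(t̂)(a) = t̂(γaγ⁻¹)`: for `t̂ ∈ Ŝ_{r(γ)}`, the character `Ad_γ(t̂) ∈ Ŝ_{s(γ)}`. -/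
noncomputable def adFun (Gg : RawGroupoid Hm U) (S : Set Hm) (γ : Hm) (χ : Hm → Circle) :
    Hm → Circle :=
  fun a => if a ∈ sFib Gg S (Gg.s γ) then χ (Gg.mul (Gg.mul γ a) (Gg.inv γ)) else 1

/-- `([γ].x)(a) = x(γ⁻¹aγ)`: the action of `G/S` on `Ŝ`, computed with a representative. -/
noncomputable def dotFun (Gg : RawGroupoid Hm U) (S : Set Hm) (γ : Hm) (χ : Hm → Circle) :
    Hm → Circle :=
  fun a => if a ∈ sFib Gg S (Gg.r γ) then χ (Gg.mul (Gg.mul (Gg.inv γ) a) γ) else 1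

/-- `Ad_γ` as a map `Ŝ → Ŝ`. -/
noncomputable def adChar (Gg : RawGroupoid Hm U) (S : Set Hm) (γ : Hm) (t : sHat Gg S) :
    sHat Gg S :=
  if h : IsCharOn Gg S (Gg.s γ) (adFun Gg S γ t.val.2) then
    ⟨(Gg.s γ, adFun Gg S γ t.val.2), h⟩
  else eChar Gg S (Gg.s γ)

/-- The arrow space of the action groupoid `H = (G/S) ⋉ Ŝ`: pairs `([γ], x)` with
`x ∈ Ŝ_{s(γ)}`. -/
def actGpd (Gg : RawGroupoid Hm U) (S : Set Hm) : Type max u v :=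
  {q : Set Hm × sHat Gg S // ∃ γ : Hm, q.1 = cls Gg S γ ∧ q.2.val.1 = Gg.s γ}

/-- A representative `γ` of the class component of an element `([γ], x)` of `(G/S) ⋉ Ŝ`. -/
noncomputable def hwRep (Gg : RawGroupoid Hm U) (S : Set Hm) (q : actGpd Gg S) : Hm :=
  q.property.choose

/-- The source `s([γ], x) = x` in `(G/S) ⋉ Ŝ`. -/
def wS (Gg : RawGroupoid Hm U) (S : Set Hm) (q : actGpd Gg S) : sHat Gg S := q.val.2

/-- The range `r([γ], x) = [γ].x` in `(G/S) ⋉ Ŝ`. -/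
noncomputable def wR (Gg : RawGroupoid Hm U) (S : Set Hm) (q : actGpd Gg S) : sHat Gg S :=
  if h : IsCharOn Gg S (Gg.r (hwRep Gg S q)) (dotFun Gg S (hwRep Gg S q) q.val.2.val.2) then
    ⟨(Gg.r (hwRep Gg S q), dotFun Gg S (hwRep Gg S q) q.val.2.val.2), h⟩
  else eChar Gg S (Gg.r (hwRep Gg S q))

/-- The unit of `(G/S) ⋉ Ŝ` at `x ∈ Ŝ`, namely `([p(x)], x)`. -/
def wUnit (Gg : RawGroupoid Hm U) (S : Set Hm) (x : sHat Gg S) : actGpd Gg S :=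
  ⟨(cls Gg S (Gg.unit x.val.1), x), ⟨Gg.unit x.val.1, rfl, (Gg.s_unit x.val.1).symm⟩⟩

/-- The product of class sets. -/
def clsProd (Gg : RawGroupoid Hm U) (c d : Set Hm) : Set Hm :=
  {ξ | ∃ γ' ∈ c, ∃ η' ∈ d, Gg.s γ' = Gg.r η' ∧ ξ = Gg.mul γ' η'}

/-- The product `([γ], [η].x)([η], x) = ([γη], x)` in `(G/S) ⋉ Ŝ` (junk value if not
composable). -/
noncomputable def wMul (Gg : RawGroupoid Hm U) (S : Set Hm) (q₁ q₂ : actGpd Gg S) :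
    actGpd Gg S :=
  if h : wS Gg S q₁ = wR Gg S q₂ ∧
      ∃ γ : Hm, clsProd Gg q₁.val.1 q₂.val.1 = cls Gg S γ ∧ q₂.val.2.val.1 = Gg.s γ then
    ⟨(clsProd Gg q₁.val.1 q₂.val.1, q₂.val.2), h.2⟩
  else q₁

/-- The inverse `([γ], x)⁻¹ = ([γ⁻¹], [γ].x)` in `(G/S) ⋉ Ŝ`. -/
noncomputable def wInv (Gg : RawGroupoid Hm U) (S : Set Hm) (q : actGpd Gg S) : actGpd Gg S :=
  if h : ∃ γ : Hm, Gg.inv '' q.val.1 = cls Gg S γ ∧ (wR Gg S q).val.1 = Gg.s γ then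
    ⟨(Gg.inv '' q.val.1, wR Gg S q), h⟩
  else q

/-- The left action `t̂ ▶ ([γ], x) = ([γ], Ad_γ(t̂)·x)` of `T = Ŝ` on `(G/S) ⋉ Ŝ`. -/
noncomputable def wActL (Gg : RawGroupoid Hm U) (S : Set Hm) (t : sHat Gg S)
    (q : actGpd Gg S) : actGpd Gg S :=
  if h : ∃ γ : Hm, q.val.1 = cls Gg S γ ∧
      (mulChar Gg S (adChar Gg S (hwRep Gg S q) t) q.val.2).val.1 = Gg.s γ then
    ⟨(q.val.1, mulChar Gg S (adChar Gg S (hwRep Gg S q) t) q.val.2), h⟩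
  else q

/-- The right action `([γ], x) ◀ t̂ = ([γ], x·t̂)` of `T = Ŝ` on `(G/S) ⋉ Ŝ`. -/
noncomputable def wActR (Gg : RawGroupoid Hm U) (S : Set Hm) (q : actGpd Gg S)
    (t : sHat Gg S) : actGpd Gg S :=
  if h : ∃ γ : Hm, q.val.1 = cls Gg S γ ∧
      (mulChar Gg S q.val.2 t).val.1 = Gg.s γ then
    ⟨(q.val.1, mulChar Gg S q.val.2 t), h⟩
  else q

/-- `λ_{([γ],x)} = Ad_{γ⁻¹}`. -/
noncomputable def wLam (Gg : RawGroupoid Hm U) (S : Set Hm) (q : actGpd Gg S)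
    (t : sHat Gg S) : sHat Gg S :=
  adChar Gg S (Gg.inv (hwRep Gg S q)) t

/-- `ρ_{([γ],x)} = Ad_γ`. -/
noncomputable def wRho (Gg : RawGroupoid Hm U) (S : Set Hm) (q : actGpd Gg S)
    (t : sHat Gg S) : sHat Gg S :=
  adChar Gg S (hwRep Gg S q) t

/-! ### Auxiliary lemmas -/

/-- Bundle of the hypotheses on `S`. -/
structure NiceS (Gg : RawGroupoid Hm U) (S : Set Hm) : Prop where
  iso : ∀ a ∈ S, Gg.r a = Gg.s a
  wide : ∀ x : U, Gg.unit x ∈ S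
  smul : ∀ a b, a ∈ S → b ∈ S → Gg.s a = Gg.r b → Gg.mul a b ∈ S
  sinv : ∀ a ∈ S, Gg.inv a ∈ S
  normal : ∀ γ a, a ∈ S → Gg.r a = Gg.r γ → Gg.mul (Gg.mul (Gg.inv γ) a) γ ∈ S
  ab : ∀ a b, a ∈ S → b ∈ S → Gg.s a = Gg.r b → Gg.r a = Gg.s b →
    Gg.mul a b = Gg.mul b a

section Lemmas

variable (Gg : RawGroupoid Hm U) (S : Set Hm)

lemma g_inv_eq_of_mul (g h : Hm) (hc : Gg.s g = Gg.r h)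
    (hm : Gg.mul g h = Gg.unit (Gg.r g)) : Gg.inv g = h := by
  have h1 : Gg.mul (Gg.inv g) (Gg.mul g h) = h := by
    rw [← Gg.mul_assoc _ _ _ (Gg.s_inv g) hc, Gg.inv_mul, hc, Gg.unit_mul]
  calc Gg.inv g = Gg.mul (Gg.inv g) (Gg.unit (Gg.s (Gg.inv g))) := (Gg.mul_unit _).symm
    _ = Gg.mul (Gg.inv g) (Gg.mul g h) := by rw [Gg.s_inv, ← hm]
    _ = h := h1

lemma g_inv_unit (x : U) : Gg.inv (Gg.unit x) = Gg.unit x := by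
  apply g_inv_eq_of_mul
  · rw [Gg.s_unit, Gg.r_unit]
  · have := Gg.mul_unit (Gg.unit x)
    rw [Gg.s_unit] at this
    rw [this, Gg.r_unit]

lemma g_inv_mul_rev (g h : Hm) (hc : Gg.s g = Gg.r h) :
    Gg.inv (Gg.mul g h) = Gg.mul (Gg.inv h) (Gg.inv g) := by
  have hih : Gg.s (Gg.inv h) = Gg.r (Gg.inv g) := by rw [Gg.s_inv, Gg.r_inv, hc]
  have cond1 : Gg.s (Gg.mul g h) = Gg.r (Gg.mul (Gg.inv h) (Gg.inv g)) := by
    rw [Gg.s_mul _ _ hc, Gg.r_mul _ _ hih, Gg.r_inv]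
  apply g_inv_eq_of_mul Gg _ _ cond1
  have e1 : Gg.mul (Gg.mul g h) (Gg.mul (Gg.inv h) (Gg.inv g))
      = Gg.mul g (Gg.mul h (Gg.mul (Gg.inv h) (Gg.inv g))) :=
    Gg.mul_assoc g h _ hc (by rw [Gg.r_mul _ _ hih, Gg.r_inv])
  have e2 : Gg.mul h (Gg.mul (Gg.inv h) (Gg.inv g)) = Gg.inv g := by
    rw [← Gg.mul_assoc h (Gg.inv h) (Gg.inv g) (by rw [Gg.r_inv]) hih, Gg.mul_inv,
      ← hc, ← Gg.r_inv g, Gg.unit_mul]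
  rw [e1, e2, Gg.mul_inv, Gg.r_mul _ _ hc]

variable {Gg S}

/-- Membership data of a class. -/
lemma mem_cls {γ η : Hm} (h : η ∈ cls Gg S γ) :
    ∃ a ∈ S, Gg.s γ = Gg.r a ∧ η = Gg.mul γ a := h

lemma self_mem_cls (hS : NiceS Gg S) (γ : Hm) : γ ∈ cls Gg S γ :=
  ⟨Gg.unit (Gg.s γ), hS.wide _, (Gg.r_unit _).symm, (Gg.mul_unit γ).symm⟩

lemma s_eq_of_mem_cls (hS : NiceS Gg S) {γ η : Hm} (h : η ∈ cls Gg S γ) :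
    Gg.s η = Gg.s γ := by
  obtain ⟨a, haS, hra, rfl⟩ := h
  rw [Gg.s_mul _ _ hra, ← hS.iso a haS, ← hra]

lemma r_eq_of_mem_cls {γ η : Hm} (h : η ∈ cls Gg S γ) : Gg.r η = Gg.r γ := by
  obtain ⟨a, haS, hra, rfl⟩ := h
  rw [Gg.r_mul _ _ hra]

lemma cls_eq_of_mem (hS : NiceS Gg S) {γ η : Hm} (h : η ∈ cls Gg S γ) :
    cls Gg S η = cls Gg S γ := by
  obtain ⟨a, haS, hra, rfl⟩ := h
  have hsa : Gg.s a = Gg.s γ := by rw [← hS.iso a haS, ← hra]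
  ext ξ
  constructor
  · rintro ⟨b, hbS, hrb, rfl⟩
    have hrb' : Gg.s a = Gg.r b := by rw [← Gg.s_mul γ a hra]; exact hrb
    have h1 : Gg.s γ = Gg.r (Gg.mul a b) := by rw [Gg.r_mul a b hrb', ← hra]
    exact ⟨Gg.mul a b, hS.smul a b haS hbS hrb', h1, Gg.mul_assoc γ a b hra hrb'⟩
  · rintro ⟨c, hcS, hrc, rfl⟩
    have hinva : Gg.inv a ∈ S := hS.sinv a haS
    have hsic : Gg.s (Gg.inv a) = Gg.r c := by rw [Gg.s_inv, ← hra]; exact hrc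
    have hmem : Gg.mul (Gg.inv a) c ∈ S := hS.smul _ _ hinva hcS hsic
    have h2 : Gg.s (Gg.mul γ a) = Gg.r (Gg.mul (Gg.inv a) c) := by
      rw [Gg.s_mul γ a hra, Gg.r_mul _ _ hsic, Gg.r_inv]
    refine ⟨Gg.mul (Gg.inv a) c, hmem, h2, ?_⟩
    have hca : Gg.s a = Gg.r (Gg.mul (Gg.inv a) c) := by
      rw [Gg.r_mul _ _ hsic, Gg.r_inv]
    rw [Gg.mul_assoc γ a _ hra hca,
      ← Gg.mul_assoc a (Gg.inv a) c (by rw [Gg.r_inv]) hsic, Gg.mul_inv]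
    have hac : Gg.r a = Gg.r c := by rw [← hra]; exact hrc
    rw [hac, Gg.unit_mul]

lemma mem_cls_of_cls_eq (hS : NiceS Gg S) {γ η : Hm} (h : cls Gg S η = cls Gg S γ) :
    η ∈ cls Gg S γ := h ▸ self_mem_cls hS η

lemma inv_mem_cls (hS : NiceS Gg S) {γ η : Hm} (h : η ∈ cls Gg S γ) :
    Gg.inv η ∈ cls Gg S (Gg.inv γ) := by
  obtain ⟨a, haS, hra, rfl⟩ := h
  have hsa : Gg.s a = Gg.s γ := by rw [← hS.iso a haS, ← hra]
  have hbS : Gg.mul (Gg.mul γ (Gg.inv a)) (Gg.inv γ) ∈ S := by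
    have hcond : Gg.r (Gg.inv a) = Gg.r (Gg.inv γ) := by
      rw [Gg.r_inv, Gg.r_inv, hsa]
    have := hS.normal (Gg.inv γ) (Gg.inv a) (hS.sinv a haS) hcond
    rwa [Gg.inv_inv] at this
  have hc1 : Gg.s γ = Gg.r (Gg.inv a) := by rw [Gg.r_inv, hsa]
  have hc2 : Gg.s (Gg.mul γ (Gg.inv a)) = Gg.r (Gg.inv γ) := by
    rw [Gg.s_mul _ _ hc1, Gg.s_inv, ← hra, Gg.r_inv]
  refine ⟨Gg.mul (Gg.mul γ (Gg.inv a)) (Gg.inv γ), hbS, ?_, ?_⟩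
  · rw [Gg.s_inv, Gg.r_mul _ _ hc2, Gg.r_mul _ _ hc1]
  · rw [g_inv_mul_rev Gg γ a hra]
    have hc3 : Gg.s (Gg.inv γ) = Gg.r (Gg.mul γ (Gg.inv a)) := by
      rw [Gg.s_inv, Gg.r_mul _ _ hc1]
    rw [← Gg.mul_assoc (Gg.inv γ) _ _ hc3 hc2,
      ← Gg.mul_assoc (Gg.inv γ) γ (Gg.inv a) (by rw [Gg.s_inv]) hc1,
      Gg.inv_mul, hc1, Gg.unit_mul]

lemma cls_image_inv (hS : NiceS Gg S) (γ : Hm) :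
    Gg.inv '' cls Gg S γ = cls Gg S (Gg.inv γ) := by
  ext ξ
  constructor
  · rintro ⟨η, hη, rfl⟩
    exact inv_mem_cls hS hη
  · intro hξ
    refine ⟨Gg.inv ξ, ?_, Gg.inv_inv ξ⟩
    have := inv_mem_cls hS hξ
    rwa [Gg.inv_inv] at this

lemma sFib_mul (hS : NiceS Gg S) {u : U} {a b : Hm}
    (ha : a ∈ sFib Gg S u) (hb : b ∈ sFib Gg S u) : Gg.mul a b ∈ sFib Gg S u := by
  obtain ⟨haS, hra, hsa⟩ := ha
  obtain ⟨hbS, hrb, hsb⟩ := hb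
  have hab : Gg.s a = Gg.r b := by rw [hsa, hrb]
  exact ⟨hS.smul a b haS hbS hab, by rw [Gg.r_mul a b hab, hra], by rw [Gg.s_mul a b hab, hsb]⟩

lemma char_off (x : sHat Gg S) {a : Hm} (h : a ∉ sFib Gg S x.val.1) : x.val.2 a = 1 :=
  x.2.2 a h

lemma sHat_ext {x y : sHat Gg S} (h1 : x.val.1 = y.val.1) (h2 : x.val.2 = y.val.2) :
    x = y := Subtype.ext (Prod.ext h1 h2)

lemma isCharOn_mulFun (hS : NiceS Gg S) (x y : sHat Gg S) (h : x.val.1 = y.val.1) :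
    IsCharOn Gg S x.val.1
      (fun a => if a ∈ sFib Gg S x.val.1 then x.val.2 a * y.val.2 a else 1) := by
  constructor
  · intro a ha b hb
    have hab : Gg.mul a b ∈ sFib Gg S x.val.1 := sFib_mul hS ha hb
    simp only [if_pos ha, if_pos hb, if_pos hab]
    rw [x.2.1 a ha b hb, y.2.1 a (h ▸ ha) b (h ▸ hb), mul_mul_mul_comm]
  · intro a ha
    simp only [if_neg ha]

lemma mulChar_val (hS : NiceS Gg S) (x y : sHat Gg S) (h : x.val.1 = y.val.1) :
    (mulChar Gg S x y).val =
      (x.val.1, fun a => if a ∈ sFib Gg S x.val.1 then x.val.2 a * y.val.2 a else 1) := by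
  unfold mulChar
  erw [dif_pos ⟨h, isCharOn_mulFun hS x y h⟩]

lemma p_mulChar_left (x y : sHat Gg S) : (mulChar Gg S x y).val.1 = x.val.1 := by
  unfold mulChar
  split_ifs with hc
  · erw [dif_pos hc]
  · erw [dif_neg hc]

lemma mulChar_comm (hS : NiceS Gg S) (x y : sHat Gg S) (h : x.val.1 = y.val.1) :
    mulChar Gg S x y = mulChar Gg S y x := by
  apply Subtype.ext
  rw [mulChar_val hS x y h, mulChar_val hS y x h.symm]
  refine Prod.ext h ?_
  funext a
  by_cases ha : a ∈ sFib Gg S x.val.1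
  · have hay : a ∈ sFib Gg S y.val.1 := h ▸ ha
    simp [ha, hay, mul_comm]
  · have hay : a ∉ sFib Gg S y.val.1 := h ▸ ha
    simp [ha, hay]

lemma mulChar_assoc (hS : NiceS Gg S) (x y z : sHat Gg S)
    (hxy : x.val.1 = y.val.1) (hyz : y.val.1 = z.val.1) :
    mulChar Gg S (mulChar Gg S x y) z = mulChar Gg S x (mulChar Gg S y z) := by
  have h1 : (mulChar Gg S x y).val.1 = z.val.1 := by
    rw [p_mulChar_left, hxy, hyz]
  have h2 : x.val.1 = (mulChar Gg S y z).val.1 := by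
    rw [p_mulChar_left]; exact hxy
  apply Subtype.ext
  simp only [mulChar_val hS (mulChar Gg S x y) z h1,
    mulChar_val hS x (mulChar Gg S y z) h2,
    mulChar_val hS x y hxy, mulChar_val hS y z hyz]
  refine Prod.ext rfl ?_
  funext a
  by_cases ha : a ∈ sFib Gg S x.val.1
  · have hay : a ∈ sFib Gg S y.val.1 := hxy ▸ ha
    simp [ha, hay, mul_assoc]
  · have hay : a ∉ sFib Gg S y.val.1 := hxy ▸ ha
    simp [ha, hay]

lemma mulChar_e_left (hS : NiceS Gg S) (x : sHat Gg S) :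
    mulChar Gg S (eChar Gg S x.val.1) x = x := by
  apply Subtype.ext
  rw [mulChar_val hS (eChar Gg S x.val.1) x rfl]
  refine Prod.ext rfl ?_
  funext a
  by_cases ha : a ∈ sFib Gg S x.val.1
  · simp only [eChar, if_pos ha, one_mul]
  · simp only [eChar, if_neg ha, (char_off x ha).symm]

lemma mulChar_e_right (hS : NiceS Gg S) (x : sHat Gg S) :
    mulChar Gg S x (eChar Gg S x.val.1) = x := by
  rw [mulChar_comm hS x (eChar Gg S x.val.1) rfl, mulChar_e_left hS x]

lemma isCharOn_invFun (hS : NiceS Gg S) (x : sHat Gg S) :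
    IsCharOn Gg S x.val.1
      (fun a => if a ∈ sFib Gg S x.val.1 then (x.val.2 a)⁻¹ else 1) := by
  constructor
  · intro a ha b hb
    have hab : Gg.mul a b ∈ sFib Gg S x.val.1 := sFib_mul hS ha hb
    simp only [if_pos ha, if_pos hb, if_pos hab]
    rw [x.2.1 a ha b hb, mul_inv]
  · intro a ha
    simp only [if_neg ha]

lemma invChar_val (hS : NiceS Gg S) (x : sHat Gg S) :
    (invChar Gg S x).val =
      (x.val.1, fun a => if a ∈ sFib Gg S x.val.1 then (x.val.2 a)⁻¹ else 1) := by
  unfold invChar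
  erw [dif_pos (isCharOn_invFun hS x)]

lemma p_invChar (x : sHat Gg S) : (invChar Gg S x).val.1 = x.val.1 := by
  unfold invChar
  split_ifs with hc
  · erw [dif_pos hc]
  · erw [dif_neg hc]

lemma mulChar_inv_left (hS : NiceS Gg S) (x : sHat Gg S) :
    mulChar Gg S (invChar Gg S x) x = eChar Gg S x.val.1 := by
  apply Subtype.ext
  rw [mulChar_val hS _ x (p_invChar x)]
  rw [invChar_val hS x]
  refine Prod.ext rfl ?_
  funext a
  by_cases ha : a ∈ sFib Gg S x.val.1
  · simp [eChar, ha]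
  · simp [eChar, ha]

lemma mulChar_cancel_left (hS : NiceS Gg S) (x y : sHat Gg S) (h : y.val.1 = x.val.1)
    (he : mulChar Gg S y x = x) : y = eChar Gg S x.val.1 := by
  have hv := congrArg Subtype.val he
  rw [mulChar_val hS y x h] at hv
  apply Subtype.ext
  refine Prod.ext h ?_
  funext a
  show y.val.2 a = 1
  by_cases ha : a ∈ sFib Gg S y.val.1
  · have := congrFun (congrArg Prod.snd hv) a
    simp only [if_pos ha] at this
    have h1 : y.val.2 a * x.val.2 a = 1 * x.val.2 a := by rw [this, one_mul]
    exact mul_right_cancel h1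
  · exact char_off y ha

lemma mulChar_cancel_right (hS : NiceS Gg S) (x t : sHat Gg S) (h : x.val.1 = t.val.1)
    (he : mulChar Gg S x t = x) : t = eChar Gg S x.val.1 := by
  rw [mulChar_comm hS x t h] at he
  have := mulChar_cancel_left hS x t h.symm he
  exact this

lemma sFib_eq {u u' : U} {a : Hm} (h : a ∈ sFib Gg S u) (h' : a ∈ sFib Gg S u') :
    u = u' := h.2.1.symm.trans h'.2.1

lemma cj_mem (hS : NiceS Gg S) {γ a : Hm} (ha : a ∈ sFib Gg S (Gg.s γ)) :
    Gg.mul (Gg.mul γ a) (Gg.inv γ) ∈ sFib Gg S (Gg.r γ) := by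
  obtain ⟨haS, hra, hsa⟩ := ha
  have hmem : Gg.mul (Gg.mul γ a) (Gg.inv γ) ∈ S := by
    have := hS.normal (Gg.inv γ) a haS (by rw [Gg.r_inv]; exact hra)
    rwa [Gg.inv_inv] at this
  have hc1 : Gg.s γ = Gg.r a := hra.symm
  have hc2 : Gg.s (Gg.mul γ a) = Gg.r (Gg.inv γ) := by
    rw [Gg.s_mul _ _ hc1, hsa, Gg.r_inv]
  exact ⟨hmem, by rw [Gg.r_mul _ _ hc2, Gg.r_mul _ _ hc1],
    by rw [Gg.s_mul _ _ hc2, Gg.s_inv]⟩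

lemma cj_mul (hS : NiceS Gg S) {γ a b : Hm}
    (ha : a ∈ sFib Gg S (Gg.s γ)) (hb : b ∈ sFib Gg S (Gg.s γ)) :
    Gg.mul (Gg.mul γ (Gg.mul a b)) (Gg.inv γ) =
      Gg.mul (Gg.mul (Gg.mul γ a) (Gg.inv γ)) (Gg.mul (Gg.mul γ b) (Gg.inv γ)) := by
  have hca : Gg.s γ = Gg.r a := ha.2.1.symm
  have hcb : Gg.s γ = Gg.r b := hb.2.1.symm
  have hab : Gg.s a = Gg.r b := by rw [ha.2.2, ← hcb]
  have e1 : Gg.mul (Gg.inv γ) (Gg.mul (Gg.mul γ b) (Gg.inv γ)) = Gg.mul b (Gg.inv γ) := by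
    rw [← Gg.mul_assoc (Gg.inv γ) (Gg.mul γ b) (Gg.inv γ)
        (by rw [Gg.s_inv, Gg.r_mul _ _ hcb])
        (by rw [Gg.s_mul _ _ hcb, hb.2.2, Gg.r_inv]),
      ← Gg.mul_assoc (Gg.inv γ) γ b (by rw [Gg.s_inv]) hcb, Gg.inv_mul, hcb, Gg.unit_mul]
  have e2 : Gg.mul (Gg.mul (Gg.mul γ a) (Gg.inv γ)) (Gg.mul (Gg.mul γ b) (Gg.inv γ)) =
      Gg.mul (Gg.mul γ a) (Gg.mul b (Gg.inv γ)) := by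
    rw [Gg.mul_assoc (Gg.mul γ a) (Gg.inv γ) _
        (by rw [Gg.s_mul _ _ hca, ha.2.2, Gg.r_inv])
        (by rw [Gg.s_inv, Gg.r_mul _ _ (by rw [Gg.s_mul _ _ hcb, hb.2.2, Gg.r_inv]),
          Gg.r_mul _ _ hcb]), e1]
  rw [e2, ← Gg.mul_assoc (Gg.mul γ a) b (Gg.inv γ)
      (by rw [Gg.s_mul _ _ hca, ha.2.2, ← hcb]) (by rw [hb.2.2, Gg.r_inv]),
    Gg.mul_assoc γ a b hca hab]

lemma cj_comp {γ γ' a : Hm} (hc : Gg.s γ = Gg.r γ') (ha : a ∈ sFib Gg S (Gg.s γ')) :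
    Gg.mul (Gg.mul (Gg.mul γ γ') a) (Gg.inv (Gg.mul γ γ')) =
      Gg.mul (Gg.mul γ (Gg.mul (Gg.mul γ' a) (Gg.inv γ'))) (Gg.inv γ) := by
  have hra : Gg.s γ' = Gg.r a := ha.2.1.symm
  rw [g_inv_mul_rev Gg γ γ' hc]
  rw [Gg.mul_assoc γ γ' a hc hra]
  rw [Gg.mul_assoc γ (Gg.mul γ' a) (Gg.mul (Gg.inv γ') (Gg.inv γ))
      (by rw [Gg.r_mul _ _ hra]; exact hc)
      (by rw [Gg.s_mul _ _ hra, ha.2.2, Gg.r_mul _ _ (by rw [Gg.s_inv, Gg.r_inv, hc]),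
        Gg.r_inv])]
  rw [← Gg.mul_assoc (Gg.mul γ' a) (Gg.inv γ') (Gg.inv γ)
      (by rw [Gg.s_mul _ _ hra, ha.2.2, Gg.r_inv])
      (by rw [Gg.s_inv, Gg.r_inv, hc])]
  rw [← Gg.mul_assoc γ (Gg.mul (Gg.mul γ' a) (Gg.inv γ')) (Gg.inv γ)
      (by rw [Gg.r_mul _ _ (by rw [Gg.s_mul _ _ hra, ha.2.2, Gg.r_inv]),
        Gg.r_mul _ _ hra]; exact hc)
      (by rw [Gg.s_mul _ _ (by rw [Gg.s_mul _ _ hra, ha.2.2, Gg.r_inv]), Gg.s_inv,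
        Gg.r_inv, hc])]

lemma cj_unit {u : U} {a : Hm} (ha : a ∈ sFib Gg S u) :
    Gg.mul (Gg.mul (Gg.unit u) a) (Gg.inv (Gg.unit u)) = a := by
  rw [g_inv_unit]
  have h1 : Gg.mul (Gg.unit u) a = a := by
    rw [← ha.2.1, Gg.unit_mul]
  rw [h1, show u = Gg.s a from ha.2.2.symm, Gg.mul_unit]

lemma cj_cls (hS : NiceS Gg S) {γ η : Hm} (h : η ∈ cls Gg S γ) {b : Hm}
    (hb : b ∈ sFib Gg S (Gg.s γ)) :
    Gg.mul (Gg.mul η b) (Gg.inv η) = Gg.mul (Gg.mul γ b) (Gg.inv γ) := by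
  obtain ⟨a, haS, hra, rfl⟩ := h
  have hsa : Gg.s a = Gg.s γ := by rw [← hS.iso a haS, ← hra]
  have hab : Gg.mul a b = Gg.mul b a :=
    hS.ab a b haS hb.1 (by rw [hsa, hb.2.1]) (by rw [← hra, hb.2.2])
  have hstep : Gg.mul (Gg.mul a b) (Gg.inv a) = b := by
    rw [hab, Gg.mul_assoc b a (Gg.inv a) (by rw [hb.2.2, hra]) (by rw [Gg.r_inv]),
      Gg.mul_inv, show Gg.r a = Gg.s b from by rw [← hra, hb.2.2], Gg.mul_unit]
  rw [g_inv_mul_rev Gg γ a hra]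
  rw [Gg.mul_assoc γ a b hra (by rw [hsa, hb.2.1])]
  rw [Gg.mul_assoc γ (Gg.mul a b) (Gg.mul (Gg.inv a) (Gg.inv γ))
      (by rw [Gg.r_mul _ _ (by rw [hsa, hb.2.1])]; exact hra)
      (by rw [Gg.s_mul _ _ (by rw [hsa, hb.2.1]), hb.2.2,
        Gg.r_mul _ _ (by rw [Gg.s_inv, Gg.r_inv, hra]), Gg.r_inv, hsa])]
  rw [← Gg.mul_assoc (Gg.mul a b) (Gg.inv a) (Gg.inv γ)
      (by rw [Gg.s_mul _ _ (by rw [hsa, hb.2.1]), hb.2.2, Gg.r_inv, hsa])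
      (by rw [Gg.s_inv, Gg.r_inv, hra]), hstep]
  rw [← Gg.mul_assoc γ b (Gg.inv γ) (by rw [hb.2.1]) (by rw [hb.2.2, Gg.r_inv])]

lemma isCharOn_adFun (hS : NiceS Gg S) (γ : Hm) (t : sHat Gg S) :
    IsCharOn Gg S (Gg.s γ) (adFun Gg S γ t.val.2) := by
  constructor
  · intro a ha b hb
    unfold adFun
    simp only [if_pos ha, if_pos hb, if_pos (sFib_mul hS ha hb)]
    rw [cj_mul hS ha hb]
    by_cases h : t.val.1 = Gg.r γ
    · have h1 : Gg.mul (Gg.mul γ a) (Gg.inv γ) ∈ sFib Gg S t.val.1 := by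
        rw [h]; exact cj_mem hS ha
      have h2 : Gg.mul (Gg.mul γ b) (Gg.inv γ) ∈ sFib Gg S t.val.1 := by
        rw [h]; exact cj_mem hS hb
      exact t.2.1 _ h1 _ h2
    · have h1 : Gg.mul (Gg.mul γ a) (Gg.inv γ) ∉ sFib Gg S t.val.1 := fun hm =>
        h (sFib_eq hm (cj_mem hS ha))
      have h2 : Gg.mul (Gg.mul γ b) (Gg.inv γ) ∉ sFib Gg S t.val.1 := fun hm =>
        h (sFib_eq hm (cj_mem hS hb))
      have h3 : Gg.mul (Gg.mul (Gg.mul γ a) (Gg.inv γ)) (Gg.mul (Gg.mul γ b) (Gg.inv γ))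
          ∉ sFib Gg S t.val.1 := fun hm =>
        h (sFib_eq hm (sFib_mul hS (cj_mem hS ha) (cj_mem hS hb)))
      rw [char_off t h1, char_off t h2, char_off t h3, one_mul]
  · intro a ha
    unfold adFun
    simp only [if_neg ha]

lemma adChar_val (hS : NiceS Gg S) (γ : Hm) (t : sHat Gg S) :
    (adChar Gg S γ t).val = (Gg.s γ, adFun Gg S γ t.val.2) := by
  unfold adChar
  erw [dif_pos (isCharOn_adFun hS γ t)]

lemma p_adChar (hS : NiceS Gg S) (γ : Hm) (t : sHat Gg S) :
    (adChar Gg S γ t).val.1 = Gg.s γ := by rw [adChar_val hS]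

lemma adFun_cls (hS : NiceS Gg S) {γ η : Hm} (h : η ∈ cls Gg S γ) (χ : Hm → Circle) :
    adFun Gg S η χ = adFun Gg S γ χ := by
  funext a
  unfold adFun
  rw [s_eq_of_mem_cls hS h]
  by_cases ha : a ∈ sFib Gg S (Gg.s γ)
  · rw [if_pos ha, if_pos ha, cj_cls hS h ha]
  · rw [if_neg ha, if_neg ha]

lemma dotFun_eq_adFun (γ : Hm) (χ : Hm → Circle) :
    dotFun Gg S γ χ = adFun Gg S (Gg.inv γ) χ := by
  funext a
  unfold dotFun adFun
  rw [Gg.s_inv, Gg.inv_inv]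

lemma adChar_cls (hS : NiceS Gg S) {γ η : Hm} (h : η ∈ cls Gg S γ) (t : sHat Gg S) :
    adChar Gg S η t = adChar Gg S γ t := by
  apply Subtype.ext
  rw [adChar_val hS η t, adChar_val hS γ t]
  exact Prod.ext (s_eq_of_mem_cls hS h) (adFun_cls hS h t.val.2)

lemma adChar_comp (hS : NiceS Gg S) {γ γ' : Hm} (hc : Gg.s γ = Gg.r γ') (t : sHat Gg S) :
    adChar Gg S γ' (adChar Gg S γ t) = adChar Gg S (Gg.mul γ γ') t := by
  apply Subtype.ext
  rw [adChar_val hS γ' _, adChar_val hS (Gg.mul γ γ') t]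
  refine Prod.ext (by rw [Gg.s_mul _ _ hc]) ?_
  funext a
  dsimp only
  unfold adFun
  rw [Gg.s_mul _ _ hc]
  by_cases ha : a ∈ sFib Gg S (Gg.s γ')
  · rw [if_pos ha, if_pos ha]
    have hcm : Gg.mul (Gg.mul γ' a) (Gg.inv γ') ∈ sFib Gg S (Gg.s γ) := by
      rw [hc]; exact cj_mem hS ha
    rw [adChar_val hS γ t]
    show adFun Gg S γ t.val.2 _ = _
    unfold adFun
    rw [if_pos hcm, cj_comp hc ha]
  · rw [if_neg ha, if_neg ha]

lemma adChar_unit (hS : NiceS Gg S) {u : U} (t : sHat Gg S) (h : t.val.1 = u) :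
    adChar Gg S (Gg.unit u) t = t := by
  apply Subtype.ext
  rw [adChar_val hS]
  refine Prod.ext (by rw [Gg.s_unit, h]) ?_
  funext a
  dsimp only
  unfold adFun
  rw [Gg.s_unit]
  by_cases ha : a ∈ sFib Gg S u
  · rw [if_pos ha, cj_unit ha]
  · rw [if_neg ha, char_off t (by rw [h]; exact ha)]

lemma adChar_e (hS : NiceS Gg S) (γ : Hm) (u : U) :
    adChar Gg S γ (eChar Gg S u) = eChar Gg S (Gg.s γ) := by
  apply Subtype.ext
  rw [adChar_val hS]
  refine Prod.ext rfl ?_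
  funext a
  dsimp only
  unfold adFun
  split <;> rfl

lemma adChar_mul (hS : NiceS Gg S) (γ : Hm) (t t' : sHat Gg S) (h : t.val.1 = t'.val.1) :
    adChar Gg S γ (mulChar Gg S t t') =
      mulChar Gg S (adChar Gg S γ t) (adChar Gg S γ t') := by
  apply Subtype.ext
  rw [adChar_val hS γ (mulChar Gg S t t'),
    mulChar_val hS (adChar Gg S γ t) (adChar Gg S γ t')
      (by rw [p_adChar hS, p_adChar hS])]
  rw [adChar_val hS γ t, adChar_val hS γ t']
  refine Prod.ext rfl ?_
  funext a
  dsimp only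
  show adFun Gg S γ (mulChar Gg S t t').val.2 a = _
  rw [mulChar_val hS t t' h]
  unfold adFun
  by_cases ha : a ∈ sFib Gg S (Gg.s γ)
  · rw [if_pos ha, if_pos ha, if_pos ha, if_pos ha]
    by_cases hcm : Gg.mul (Gg.mul γ a) (Gg.inv γ) ∈ sFib Gg S t.val.1
    · dsimp only
      rw [if_pos hcm]
    · dsimp only
      rw [if_neg hcm, char_off t hcm, char_off t' (by rw [← h]; exact hcm), one_mul]
  · simp only [if_neg ha]

lemma hwRep_spec (q : actGpd Gg S) :
    q.val.1 = cls Gg S (hwRep Gg S q) ∧ q.val.2.val.1 = Gg.s (hwRep Gg S q) :=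
  q.property.choose_spec

lemma rep_mem (hS : NiceS Gg S) {q : actGpd Gg S} {γ : Hm} (h : q.val.1 = cls Gg S γ) :
    hwRep Gg S q ∈ cls Gg S γ := by
  have h1 := (hwRep_spec q).1
  have h2 : cls Gg S (hwRep Gg S q) = cls Gg S γ := by rw [← h1, h]
  exact mem_cls_of_cls_eq hS h2

lemma fib_eq_s (hS : NiceS Gg S) {q : actGpd Gg S} {γ : Hm} (h : q.val.1 = cls Gg S γ) :
    q.val.2.val.1 = Gg.s γ := by
  rw [(hwRep_spec q).2, s_eq_of_mem_cls hS (rep_mem hS h)]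

lemma wR_eq (hS : NiceS Gg S) {q : actGpd Gg S} {γ : Hm} (h : q.val.1 = cls Gg S γ) :
    wR Gg S q = adChar Gg S (Gg.inv γ) q.val.2 := by
  have hd : dotFun Gg S (hwRep Gg S q) q.val.2.val.2 =
      adFun Gg S (Gg.inv (hwRep Gg S q)) q.val.2.val.2 := dotFun_eq_adFun _ _
  have hcond : IsCharOn Gg S (Gg.r (hwRep Gg S q))
      (dotFun Gg S (hwRep Gg S q) q.val.2.val.2) := by
    rw [hd, ← Gg.s_inv (hwRep Gg S q)]
    exact isCharOn_adFun hS _ q.val.2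
  unfold wR
  erw [dif_pos hcond]
  apply Subtype.ext
  rw [adChar_val hS (Gg.inv γ) q.val.2]
  refine Prod.ext ?_ ?_
  · show Gg.r (hwRep Gg S q) = Gg.s (Gg.inv γ)
    rw [Gg.s_inv, r_eq_of_mem_cls (rep_mem hS h)]
  · show dotFun Gg S (hwRep Gg S q) q.val.2.val.2 = _
    rw [hd, adFun_cls hS (inv_mem_cls hS (rep_mem hS h)) q.val.2.val.2]

lemma p_wR (hS : NiceS Gg S) {q : actGpd Gg S} {γ : Hm} (h : q.val.1 = cls Gg S γ) :
    (wR Gg S q).val.1 = Gg.r γ := by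
  rw [wR_eq hS h, p_adChar hS, Gg.s_inv]

lemma clsProd_eq (hS : NiceS Gg S) {γ η : Hm} (hc : Gg.s γ = Gg.r η) :
    clsProd Gg (cls Gg S γ) (cls Gg S η) = cls Gg S (Gg.mul γ η) := by
  ext ξ
  constructor
  · rintro ⟨γ', ⟨a, haS, hra, rfl⟩, η', ⟨b, hbS, hrb, rfl⟩, hcomp, rfl⟩
    have hsa : Gg.s a = Gg.s γ := by rw [← hS.iso a haS, ← hra]
    have hsb : Gg.s b = Gg.s η := by rw [← hS.iso b hbS, ← hrb]
    have hraη : Gg.r a = Gg.r η := by rw [← hra, hc]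
    have hcS : Gg.mul (Gg.mul (Gg.inv η) a) η ∈ S := hS.normal η a haS hraη
    have hc1 : Gg.s (Gg.inv η) = Gg.r a := by rw [Gg.s_inv, hraη]
    have hc2 : Gg.s (Gg.mul (Gg.inv η) a) = Gg.r η := by rw [Gg.s_mul _ _ hc1, hsa, hc]
    have hrc : Gg.r (Gg.mul (Gg.mul (Gg.inv η) a) η) = Gg.s η := by
      rw [Gg.r_mul _ _ hc2, Gg.r_mul _ _ hc1, Gg.r_inv]
    have hsc : Gg.s (Gg.mul (Gg.mul (Gg.inv η) a) η) = Gg.s η := by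
      rw [Gg.s_mul _ _ hc2]
    have hdS : Gg.mul (Gg.mul (Gg.mul (Gg.inv η) a) η) b ∈ S :=
      hS.smul _ _ hcS hbS (by rw [hsc, hrb])
    refine ⟨Gg.mul (Gg.mul (Gg.mul (Gg.inv η) a) η) b, hdS, ?_, ?_⟩
    · rw [Gg.s_mul _ _ hc, Gg.r_mul _ _ (by rw [hsc, hrb]), hrc]
    · -- mul (mul γ a) (mul η b) = mul (mul γ η) (mul (mul (mul (inv η) a) η) b)
      have E1 : Gg.mul (Gg.mul γ a) (Gg.mul η b) = Gg.mul γ (Gg.mul a (Gg.mul η b)) :=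
        Gg.mul_assoc γ a (Gg.mul η b) hra (by rw [hsa, hc, Gg.r_mul _ _ hrb])
      have E2 : Gg.mul η (Gg.mul (Gg.mul (Gg.inv η) a) η) = Gg.mul a η := by
        rw [← Gg.mul_assoc η (Gg.mul (Gg.inv η) a) η
            (by rw [Gg.r_mul _ _ hc1, Gg.r_inv]) hc2,
          ← Gg.mul_assoc η (Gg.inv η) a (by rw [Gg.r_inv]) hc1, Gg.mul_inv,
          ← hraη, Gg.unit_mul]
      have E3 : Gg.mul (Gg.mul γ η) (Gg.mul (Gg.mul (Gg.mul (Gg.inv η) a) η) b) =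
          Gg.mul γ (Gg.mul η (Gg.mul (Gg.mul (Gg.mul (Gg.inv η) a) η) b)) :=
        Gg.mul_assoc γ η _ hc (by rw [Gg.r_mul _ _ (by rw [hsc, hrb]), hrc])
      have E4 : Gg.mul η (Gg.mul (Gg.mul (Gg.mul (Gg.inv η) a) η) b) =
          Gg.mul a (Gg.mul η b) := by
        rw [← Gg.mul_assoc η (Gg.mul (Gg.mul (Gg.inv η) a) η) b (by rw [hrc])
            (by rw [hsc, hrb]), E2,
          Gg.mul_assoc a η b (by rw [hsa, hc]) hrb]
      rw [E1, E3, E4]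
  · rintro ⟨c, hcS, hrc, rfl⟩
    have hrc' : Gg.s η = Gg.r c := by rw [← Gg.s_mul γ η hc]; exact hrc
    refine ⟨γ, self_mem_cls hS γ, Gg.mul η c, ⟨c, hcS, hrc', rfl⟩, ?_, ?_⟩
    · rw [Gg.r_mul _ _ hrc']; exact hc
    · exact Gg.mul_assoc γ η c hc hrc'

lemma rep_comp (hS : NiceS Gg S) {q₁ q₂ : actGpd Gg S} {γ₁ γ₂ : Hm}
    (h1 : q₁.val.1 = cls Gg S γ₁) (h2 : q₂.val.1 = cls Gg S γ₂)
    (hqs : wS Gg S q₁ = wR Gg S q₂) : Gg.s γ₁ = Gg.r γ₂ := by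
  have h3 : q₁.val.2.val.1 = (wR Gg S q₂).val.1 :=
    congrArg (fun x : sHat Gg S => x.val.1) hqs
  rw [p_wR hS h2] at h3
  rw [← fib_eq_s hS h1]
  exact h3

lemma wMul_val (hS : NiceS Gg S) {q₁ q₂ : actGpd Gg S} {γ₁ γ₂ : Hm}
    (h1 : q₁.val.1 = cls Gg S γ₁) (h2 : q₂.val.1 = cls Gg S γ₂)
    (hqs : wS Gg S q₁ = wR Gg S q₂) :
    (wMul Gg S q₁ q₂).val = (cls Gg S (Gg.mul γ₁ γ₂), q₂.val.2) := by
  have hc := rep_comp hS h1 h2 hqs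
  have hprod : clsProd Gg q₁.val.1 q₂.val.1 = cls Gg S (Gg.mul γ₁ γ₂) := by
    rw [h1, h2, clsProd_eq hS hc]
  have hfib : q₂.val.2.val.1 = Gg.s (Gg.mul γ₁ γ₂) := by
    rw [Gg.s_mul _ _ hc]; exact fib_eq_s hS h2
  unfold wMul
  erw [dif_pos ⟨hqs, ⟨Gg.mul γ₁ γ₂, hprod, hfib⟩⟩]
  exact Prod.ext hprod rfl

lemma wInv_val (hS : NiceS Gg S) {q : actGpd Gg S} {γ : Hm} (h : q.val.1 = cls Gg S γ) :
    (wInv Gg S q).val = (cls Gg S (Gg.inv γ), wR Gg S q) := by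
  have himg : Gg.inv '' q.val.1 = cls Gg S (Gg.inv γ) := by rw [h, cls_image_inv hS]
  have hfib : (wR Gg S q).val.1 = Gg.s (Gg.inv γ) := by rw [p_wR hS h, Gg.s_inv]
  unfold wInv
  erw [dif_pos ⟨Gg.inv γ, himg, hfib⟩]
  exact Prod.ext himg rfl

lemma wActL_val (hS : NiceS Gg S) {q : actGpd Gg S} {γ : Hm} (h : q.val.1 = cls Gg S γ)
    (t : sHat Gg S) :
    (wActL Gg S t q).val = (q.val.1, mulChar Gg S (adChar Gg S γ t) q.val.2) := by
  unfold wActL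
  erw [dif_pos ⟨hwRep Gg S q, (hwRep_spec q).1,
    by rw [p_mulChar_left, p_adChar hS]⟩]
  refine Prod.ext rfl ?_
  show mulChar Gg S (adChar Gg S (hwRep Gg S q) t) q.val.2 = _
  rw [adChar_cls hS (rep_mem hS h) t]

lemma wActR_val {q : actGpd Gg S} (t : sHat Gg S) :
    (wActR Gg S q t).val = (q.val.1, mulChar Gg S q.val.2 t) := by
  unfold wActR
  erw [dif_pos ⟨hwRep Gg S q, (hwRep_spec q).1,
    by rw [p_mulChar_left]; exact (hwRep_spec q).2⟩]

lemma wLam_eq (hS : NiceS Gg S) {q : actGpd Gg S} {γ : Hm} (h : q.val.1 = cls Gg S γ)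
    (t : sHat Gg S) : wLam Gg S q t = adChar Gg S (Gg.inv γ) t := by
  unfold wLam
  exact adChar_cls hS (inv_mem_cls hS (rep_mem hS h)) t

lemma wRho_eq (hS : NiceS Gg S) {q : actGpd Gg S} {γ : Hm} (h : q.val.1 = cls Gg S γ)
    (t : sHat Gg S) : wRho Gg S q t = adChar Gg S γ t := by
  unfold wRho
  exact adChar_cls hS (rep_mem hS h) t

lemma wS_def (q : actGpd Gg S) : wS Gg S q = q.val.2 := rfl

lemma val1_of {q : actGpd Gg S} {c : Set Hm} {x : sHat Gg S} (h : q.val = (c, x)) :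
    q.val.1 = c := by rw [h]

lemma val2_of {q : actGpd Gg S} {c : Set Hm} {x : sHat Gg S} (h : q.val = (c, x)) :
    q.val.2 = x := by rw [h]

lemma w_r_unit (hS : NiceS Gg S) (x : sHat Gg S) : wR Gg S (wUnit Gg S x) = x := by
  rw [wR_eq hS (rfl : (wUnit Gg S x).val.1 = cls Gg S (Gg.unit x.val.1)), g_inv_unit]
  exact adChar_unit hS x rfl

lemma w_r_mul (hS : NiceS Gg S) (q₁ q₂ : actGpd Gg S) (h : wS Gg S q₁ = wR Gg S q₂) :
    wR Gg S (wMul Gg S q₁ q₂) = wR Gg S q₁ := by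
  have h1 := (hwRep_spec q₁).1
  have h2 := (hwRep_spec q₂).1
  have hc := rep_comp hS h1 h2 h
  have hm := wMul_val hS h1 h2 h
  rw [wR_eq hS (congrArg Prod.fst hm), congrArg Prod.snd hm,
    g_inv_mul_rev Gg _ _ hc,
    ← adChar_comp hS (by rw [Gg.s_inv, Gg.r_inv]; exact hc.symm) q₂.val.2,
    ← wR_eq hS h2, ← h, wS_def]
  exact (wR_eq hS h1).symm

lemma w_s_mul (hS : NiceS Gg S) (q₁ q₂ : actGpd Gg S) (h : wS Gg S q₁ = wR Gg S q₂) :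
    wS Gg S (wMul Gg S q₁ q₂) = wS Gg S q₂ := by
  rw [wS_def, wS_def, wMul_val hS (hwRep_spec q₁).1 (hwRep_spec q₂).1 h]

lemma w_r_inv (hS : NiceS Gg S) (q : actGpd Gg S) : wR Gg S (wInv Gg S q) = wS Gg S q := by
  have h1 := (hwRep_spec q).1
  have hI := wInv_val hS h1
  rw [wR_eq hS (congrArg Prod.fst hI), congrArg Prod.snd hI, Gg.inv_inv, wR_eq hS h1,
    adChar_comp hS (by rw [Gg.s_inv]) q.val.2, Gg.inv_mul]
  exact adChar_unit hS q.val.2 (hwRep_spec q).2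

lemma w_s_inv (hS : NiceS Gg S) (q : actGpd Gg S) : wS Gg S (wInv Gg S q) = wR Gg S q :=
  congrArg Prod.snd (wInv_val hS (hwRep_spec q).1)

lemma w_inv_inv (hS : NiceS Gg S) (q : actGpd Gg S) : wInv Gg S (wInv Gg S q) = q := by
  have h1 := (hwRep_spec q).1
  have hI := wInv_val hS h1
  apply Subtype.ext
  rw [wInv_val hS (congrArg Prod.fst hI), Gg.inv_inv, w_r_inv hS q]
  exact Prod.ext h1.symm rfl

lemma w_mul_assoc (hS : NiceS Gg S) (q₁ q₂ q₃ : actGpd Gg S)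
    (h12 : wS Gg S q₁ = wR Gg S q₂) (h23 : wS Gg S q₂ = wR Gg S q₃) :
    wMul Gg S (wMul Gg S q₁ q₂) q₃ = wMul Gg S q₁ (wMul Gg S q₂ q₃) := by
  have h1 := (hwRep_spec q₁).1
  have h2 := (hwRep_spec q₂).1
  have h3 := (hwRep_spec q₃).1
  have hc12 := rep_comp hS h1 h2 h12
  have hc23 := rep_comp hS h2 h3 h23
  have hm12 := wMul_val hS h1 h2 h12
  have hm23 := wMul_val hS h2 h3 h23
  have hA : wS Gg S (wMul Gg S q₁ q₂) = wR Gg S q₃ := by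
    rw [wS_def, congrArg Prod.snd hm12, ← wS_def]; exact h23
  have hB : wS Gg S q₁ = wR Gg S (wMul Gg S q₂ q₃) := by
    rw [w_r_mul hS q₂ q₃ h23]; exact h12
  apply Subtype.ext
  rw [wMul_val hS (congrArg Prod.fst hm12) h3 hA,
    wMul_val hS h1 (congrArg Prod.fst hm23) hB]
  refine Prod.ext ?_ ?_
  · rw [Gg.mul_assoc _ _ _ hc12 hc23]
  · rw [congrArg Prod.snd hm23]

lemma w_unit_mul (hS : NiceS Gg S) (q : actGpd Gg S) :
    wMul Gg S (wUnit Gg S (wR Gg S q)) q = q := by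
  have h1 := (hwRep_spec q).1
  have hu : (wUnit Gg S (wR Gg S q)).val.1 =
      cls Gg S (Gg.unit (Gg.r (hwRep Gg S q))) := by
    show cls Gg S (Gg.unit (wR Gg S q).val.1) = _
    rw [p_wR hS h1]
  have hcond : wS Gg S (wUnit Gg S (wR Gg S q)) = wR Gg S q := rfl
  apply Subtype.ext
  rw [wMul_val hS hu h1 hcond]
  refine Prod.ext ?_ rfl
  rw [Gg.unit_mul]
  exact h1.symm

lemma w_mul_unit (hS : NiceS Gg S) (q : actGpd Gg S) :
    wMul Gg S q (wUnit Gg S (wS Gg S q)) = q := by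
  have h1 := (hwRep_spec q).1
  have hu : (wUnit Gg S (wS Gg S q)).val.1 =
      cls Gg S (Gg.unit (Gg.s (hwRep Gg S q))) := by
    show cls Gg S (Gg.unit (wS Gg S q).val.1) = _
    rw [wS_def, (hwRep_spec q).2]
  have hcond : wS Gg S q = wR Gg S (wUnit Gg S (wS Gg S q)) :=
    (w_r_unit hS (wS Gg S q)).symm
  apply Subtype.ext
  rw [wMul_val hS h1 hu hcond]
  refine Prod.ext ?_ rfl
  rw [Gg.mul_unit]
  exact h1.symm

lemma w_inv_mul (hS : NiceS Gg S) (q : actGpd Gg S) :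
    wMul Gg S (wInv Gg S q) q = wUnit Gg S (wS Gg S q) := by
  have h1 := (hwRep_spec q).1
  have hI := wInv_val hS h1
  apply Subtype.ext
  rw [wMul_val hS (congrArg Prod.fst hI) h1 (w_s_inv hS q)]
  refine Prod.ext ?_ rfl
  show cls Gg S (Gg.mul (Gg.inv (hwRep Gg S q)) (hwRep Gg S q)) =
    cls Gg S (Gg.unit (wS Gg S q).val.1)
  rw [Gg.inv_mul, wS_def, (hwRep_spec q).2]

lemma w_mul_inv (hS : NiceS Gg S) (q : actGpd Gg S) :
    wMul Gg S q (wInv Gg S q) = wUnit Gg S (wR Gg S q) := by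
  have h1 := (hwRep_spec q).1
  have hI := wInv_val hS h1
  apply Subtype.ext
  rw [wMul_val hS h1 (congrArg Prod.fst hI) (w_r_inv hS q).symm]
  refine Prod.ext ?_ (by rw [hI]; rfl)
  show cls Gg S (Gg.mul (hwRep Gg S q) (Gg.inv (hwRep Gg S q))) =
    cls Gg S (Gg.unit (wR Gg S q).val.1)
  rw [Gg.mul_inv, p_wR hS h1]

lemma wR_actL (hS : NiceS Gg S) {q : actGpd Gg S} {γ : Hm} (h1 : q.val.1 = cls Gg S γ)
    (t : sHat Gg S) (ht' : t.val.1 = Gg.r γ) :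
    wR Gg S (wActL Gg S t q) = mulChar Gg S t (wR Gg S q) := by
  have hqL : (wActL Gg S t q).val.1 = cls Gg S γ :=
    (congrArg Prod.fst (wActL_val hS h1 t)).trans h1
  rw [wR_eq hS hqL, congrArg Prod.snd (wActL_val hS h1 t),
    adChar_mul hS (Gg.inv γ) (adChar Gg S γ t) q.val.2
      (by rw [p_adChar hS]; exact (fib_eq_s hS h1).symm),
    adChar_comp hS (by rw [Gg.r_inv]) t, Gg.mul_inv, adChar_unit hS t ht',
    ← wR_eq hS h1]

lemma w_actL_id (hS : NiceS Gg S) (q : actGpd Gg S) :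
    wActL Gg S (eChar Gg S (pChar Gg S (wR Gg S q))) q = q := by
  have h1 := (hwRep_spec q).1
  apply Subtype.ext
  rw [wActL_val hS h1 _]
  refine Prod.ext rfl ?_
  show mulChar Gg S (adChar Gg S (hwRep Gg S q)
    (eChar Gg S (pChar Gg S (wR Gg S q)))) q.val.2 = q.val.2
  rw [adChar_e hS, ← (hwRep_spec q).2]
  exact mulChar_e_left hS q.val.2

lemma w_actL_mul (hS : NiceS Gg S) (t t' : sHat Gg S) (q : actGpd Gg S)
    (htt' : pChar Gg S t = pChar Gg S t')
    (ht' : pChar Gg S t' = pChar Gg S (wR Gg S q)) :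
    wActL Gg S (mulChar Gg S t t') q = wActL Gg S t (wActL Gg S t' q) := by
  have h1 := (hwRep_spec q).1
  have hq' : (wActL Gg S t' q).val.1 = cls Gg S (hwRep Gg S q) :=
    (congrArg Prod.fst (wActL_val hS h1 t')).trans h1
  apply Subtype.ext
  rw [wActL_val hS h1 (mulChar Gg S t t'), wActL_val hS hq' t]
  refine Prod.ext (congrArg Prod.fst (wActL_val hS h1 t')).symm ?_
  rw [congrArg Prod.snd (wActL_val hS h1 t'),
    adChar_mul hS (hwRep Gg S q) t t' htt']
  exact mulChar_assoc hS _ _ _ (by rw [p_adChar hS, p_adChar hS])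
    (by rw [p_adChar hS]; exact (hwRep_spec q).2.symm)

lemma w_pr_actL (hS : NiceS Gg S) (t : sHat Gg S) (q : actGpd Gg S)
    (ht : pChar Gg S t = pChar Gg S (wR Gg S q)) :
    pChar Gg S (wR Gg S (wActL Gg S t q)) = pChar Gg S t := by
  have h1 := (hwRep_spec q).1
  have hq' : (wActL Gg S t q).val.1 = cls Gg S (hwRep Gg S q) :=
    (congrArg Prod.fst (wActL_val hS h1 t)).trans h1
  have ht2 : t.val.1 = (wR Gg S q).val.1 := ht
  show (wR Gg S (wActL Gg S t q)).val.1 = t.val.1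
  rw [p_wR hS hq', ht2, p_wR hS h1]

lemma w_actL_free (hS : NiceS Gg S) (t : sHat Gg S) (q : actGpd Gg S)
    (ht : pChar Gg S t = pChar Gg S (wR Gg S q)) (he : wActL Gg S t q = q) :
    t = eChar Gg S (pChar Gg S (wR Gg S q)) := by
  have h1 := (hwRep_spec q).1
  have ht2 : t.val.1 = (wR Gg S q).val.1 := ht
  have ht' : t.val.1 = Gg.r (hwRep Gg S q) := ht2.trans (p_wR hS h1)
  have hv : mulChar Gg S (adChar Gg S (hwRep Gg S q) t) q.val.2 = q.val.2 := by
    have h' : (wActL Gg S t q).val.2 = q.val.2 :=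
      congrArg (fun z : actGpd Gg S => z.val.2) he
    rw [wActL_val hS h1 t] at h'
    exact h'
  have h0 : adChar Gg S (hwRep Gg S q) t = eChar Gg S q.val.2.val.1 :=
    mulChar_cancel_left hS q.val.2 _
      (by rw [p_adChar hS]; exact (hwRep_spec q).2.symm) hv
  have hrec : adChar Gg S (Gg.inv (hwRep Gg S q))
      (adChar Gg S (hwRep Gg S q) t) = t := by
    rw [adChar_comp hS (by rw [Gg.r_inv]) t, Gg.mul_inv, adChar_unit hS t ht']
  calc t = adChar Gg S (Gg.inv (hwRep Gg S q)) (adChar Gg S (hwRep Gg S q) t) :=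
        hrec.symm
    _ = adChar Gg S (Gg.inv (hwRep Gg S q)) (eChar Gg S q.val.2.val.1) := by rw [h0]
    _ = eChar Gg S (Gg.s (Gg.inv (hwRep Gg S q))) := adChar_e hS _ _
    _ = eChar Gg S (pChar Gg S (wR Gg S q)) := by
        rw [Gg.s_inv]
        show _ = eChar Gg S (wR Gg S q).val.1
        rw [p_wR hS h1]

lemma w_actR_id (hS : NiceS Gg S) (q : actGpd Gg S) :
    wActR Gg S q (eChar Gg S (pChar Gg S (wS Gg S q))) = q := by
  apply Subtype.ext
  rw [wActR_val _]
  refine Prod.ext rfl ?_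
  exact mulChar_e_right hS q.val.2

lemma w_actR_mul (hS : NiceS Gg S) (q : actGpd Gg S) (t t' : sHat Gg S)
    (ht : pChar Gg S t = pChar Gg S (wS Gg S q)) (ht' : pChar Gg S t' = pChar Gg S t) :
    wActR Gg S q (mulChar Gg S t t') = wActR Gg S (wActR Gg S q t) t' := by
  have ht2 : t.val.1 = q.val.2.val.1 := ht
  have ht2' : t'.val.1 = t.val.1 := ht'
  apply Subtype.ext
  rw [wActR_val (mulChar Gg S t t'), wActR_val (q := wActR Gg S q t) t']
  refine Prod.ext (congrArg Prod.fst (wActR_val (q := q) t)).symm ?_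
  rw [congrArg Prod.snd (wActR_val (q := q) t)]
  exact (mulChar_assoc hS q.val.2 t t' ht2.symm ht2'.symm).symm

lemma w_ps_actR (hS : NiceS Gg S) (q : actGpd Gg S) (t : sHat Gg S)
    (ht : pChar Gg S t = pChar Gg S (wS Gg S q)) :
    pChar Gg S (wS Gg S (wActR Gg S q t)) = pChar Gg S t := by
  have ht2 : t.val.1 = q.val.2.val.1 := ht
  show (wActR Gg S q t).val.2.val.1 = t.val.1
  rw [congrArg Prod.snd (wActR_val (q := q) t), p_mulChar_left]
  exact ht2.symm

lemma w_actR_free (hS : NiceS Gg S) (q : actGpd Gg S) (t : sHat Gg S)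
    (ht : pChar Gg S t = pChar Gg S (wS Gg S q)) (he : wActR Gg S q t = q) :
    t = eChar Gg S (pChar Gg S (wS Gg S q)) := by
  have ht2 : t.val.1 = q.val.2.val.1 := ht
  have hv : mulChar Gg S q.val.2 t = q.val.2 := by
    have h' : (wActR Gg S q t).val.2 = q.val.2 :=
      congrArg (fun z : actGpd Gg S => z.val.2) he
    rw [wActR_val (q := q) t] at h'
    exact h'
  exact mulChar_cancel_right hS q.val.2 t ht2.symm hv

lemma w_act_comm (hS : NiceS Gg S) (t : sHat Gg S) (q : actGpd Gg S) (t' : sHat Gg S)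
    (ht : pChar Gg S t = pChar Gg S (wR Gg S q))
    (ht' : pChar Gg S t' = pChar Gg S (wS Gg S q)) :
    wActR Gg S (wActL Gg S t q) t' = wActL Gg S t (wActR Gg S q t') := by
  have h1 := (hwRep_spec q).1
  have ht2' : t'.val.1 = q.val.2.val.1 := ht'
  have hqR : (wActR Gg S q t').val.1 = cls Gg S (hwRep Gg S q) :=
    (congrArg Prod.fst (wActR_val (q := q) t')).trans h1
  apply Subtype.ext
  rw [wActR_val (q := wActL Gg S t q) t', wActL_val hS hqR t]
  refine Prod.ext ?_ ?_
  · rw [congrArg Prod.fst (wActL_val hS h1 t), congrArg Prod.fst (wActR_val (q := q) t')]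
  · rw [congrArg Prod.snd (wActL_val hS h1 t), congrArg Prod.snd (wActR_val (q := q) t')]
    exact mulChar_assoc hS _ _ _
      (by rw [p_adChar hS]; exact (hwRep_spec q).2.symm) ht2'.symm

lemma w_unit_act (hS : NiceS Gg S) (u t : sHat Gg S)
    (ht : pChar Gg S t = pChar Gg S u) :
    wActL Gg S t (wUnit Gg S u) = wActR Gg S (wUnit Gg S u) t := by
  have ht2 : t.val.1 = u.val.1 := ht
  apply Subtype.ext
  rw [wActL_val hS (rfl : (wUnit Gg S u).val.1 = cls Gg S (Gg.unit u.val.1)) t,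
    wActR_val (q := wUnit Gg S u) t]
  refine Prod.ext rfl ?_
  show mulChar Gg S (adChar Gg S (Gg.unit u.val.1) t) u = mulChar Gg S u t
  rw [adChar_unit hS t ht2]
  exact mulChar_comm hS t u ht2

lemma w_r_actL (hS : NiceS Gg S) (t : sHat Gg S) (q : actGpd Gg S)
    (ht : pChar Gg S t = pChar Gg S (wR Gg S q)) :
    wUnit Gg S (wR Gg S (wActL Gg S t q)) = wActL Gg S t (wUnit Gg S (wR Gg S q)) := by
  have h1 := (hwRep_spec q).1
  have ht2 : t.val.1 = (wR Gg S q).val.1 := ht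
  have ht' : t.val.1 = Gg.r (hwRep Gg S q) := ht2.trans (p_wR hS h1)
  have hKey := wR_actL hS h1 t ht'
  apply Subtype.ext
  rw [hKey, wActL_val hS
    (rfl : (wUnit Gg S (wR Gg S q)).val.1 = cls Gg S (Gg.unit (wR Gg S q).val.1)) t]
  refine Prod.ext ?_ ?_
  · show cls Gg S (Gg.unit (mulChar Gg S t (wR Gg S q)).val.1) = _
    rw [p_mulChar_left, ht2]
    rfl
  · show mulChar Gg S t (wR Gg S q) =
      mulChar Gg S (adChar Gg S (Gg.unit (wR Gg S q).val.1) t) (wR Gg S q)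
    rw [adChar_unit hS t ht2]

lemma w_s_actR (hS : NiceS Gg S) (q : actGpd Gg S) (t : sHat Gg S)
    (ht : pChar Gg S t = pChar Gg S (wS Gg S q)) :
    wUnit Gg S (wS Gg S (wActR Gg S q t)) = wActR Gg S (wUnit Gg S (wS Gg S q)) t := by
  have h2 : wS Gg S (wActR Gg S q t) = mulChar Gg S q.val.2 t := by
    rw [wS_def, wActR_val (q := q) t]
  apply Subtype.ext
  rw [h2, wActR_val (q := wUnit Gg S (wS Gg S q)) t]
  refine Prod.ext ?_ rfl
  show cls Gg S (Gg.unit (mulChar Gg S q.val.2 t).val.1) =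
    cls Gg S (Gg.unit (wS Gg S q).val.1)
  rw [p_mulChar_left]
  rfl

lemma w_lam_p (hS : NiceS Gg S) (q : actGpd Gg S) (t : sHat Gg S) :
    pChar Gg S (wLam Gg S q t) = pChar Gg S (wR Gg S q) := by
  have h1 := (hwRep_spec q).1
  show (wLam Gg S q t).val.1 = (wR Gg S q).val.1
  rw [wLam_eq hS h1 t, p_adChar hS, Gg.s_inv, p_wR hS h1]

lemma w_rho_p (hS : NiceS Gg S) (q : actGpd Gg S) (t : sHat Gg S) :
    pChar Gg S (wRho Gg S q t) = pChar Gg S (wS Gg S q) := by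
  have h1 := (hwRep_spec q).1
  show (wRho Gg S q t).val.1 = (wS Gg S q).val.1
  rw [wRho_eq hS h1 t, p_adChar hS]
  exact (hwRep_spec q).2.symm

lemma w_spec_a (hS : NiceS Gg S) (q : actGpd Gg S) (t : sHat Gg S)
    (ht : pChar Gg S t = pChar Gg S (wS Gg S q)) :
    wActR Gg S q t = wActL Gg S (wLam Gg S q t) q := by
  have h1 := (hwRep_spec q).1
  have ht2 : t.val.1 = q.val.2.val.1 := ht
  apply Subtype.ext
  rw [wActR_val (q := q) t, wActL_val hS h1 (wLam Gg S q t)]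
  refine Prod.ext rfl ?_
  rw [wLam_eq hS h1 t, adChar_comp hS (by rw [Gg.s_inv]) t, Gg.inv_mul,
    adChar_unit hS t (by rw [ht2, (hwRep_spec q).2])]
  exact mulChar_comm hS q.val.2 t ht2.symm

lemma w_spec_b (hS : NiceS Gg S) (q : actGpd Gg S) (t : sHat Gg S)
    (ht : pChar Gg S t = pChar Gg S (wR Gg S q)) :
    wActL Gg S t q = wActR Gg S q (wRho Gg S q t) := by
  have h1 := (hwRep_spec q).1
  apply Subtype.ext
  rw [wActL_val hS h1 t, wActR_val (q := q) (wRho Gg S q t)]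
  refine Prod.ext rfl ?_
  rw [wRho_eq hS h1 t]
  exact mulChar_comm hS _ q.val.2 (by rw [p_adChar hS]; exact (hwRep_spec q).2.symm)

lemma w_spec_c (hS : NiceS Gg S) (q₁ q₂ : actGpd Gg S) (t : sHat Gg S)
    (hqs : wS Gg S q₁ = wR Gg S q₂)
    (ht : pChar Gg S t = pChar Gg S (wS Gg S q₂)) :
    wActR Gg S (wMul Gg S q₁ q₂) t =
      wMul Gg S (wActR Gg S q₁ (wLam Gg S q₂ t)) (wActR Gg S q₂ t) := by
  have h1 := (hwRep_spec q₁).1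
  have h2 := (hwRep_spec q₂).1
  have ht2 : t.val.1 = q₂.val.2.val.1 := ht
  have hm := wMul_val hS h1 h2 hqs
  have hq1' : (wActR Gg S q₁ (wLam Gg S q₂ t)).val.1 = cls Gg S (hwRep Gg S q₁) :=
    (congrArg Prod.fst (wActR_val (q := q₁) (wLam Gg S q₂ t))).trans h1
  have hq2' : (wActR Gg S q₂ t).val.1 = cls Gg S (hwRep Gg S q₂) :=
    (congrArg Prod.fst (wActR_val (q := q₂) t)).trans h2
  have hcomp' : wS Gg S (wActR Gg S q₁ (wLam Gg S q₂ t)) = wR Gg S (wActR Gg S q₂ t) := by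
    show (wActR Gg S q₁ (wLam Gg S q₂ t)).val.2 = _
    rw [congrArg Prod.snd (wActR_val (q := q₁) (wLam Gg S q₂ t)), wR_eq hS hq2',
      congrArg Prod.snd (wActR_val (q := q₂) t),
      adChar_mul hS (Gg.inv (hwRep Gg S q₂)) q₂.val.2 t ht2.symm,
      ← wR_eq hS h2, ← wLam_eq hS h2 t, ← hqs]
    rfl
  apply Subtype.ext
  rw [wActR_val (q := wMul Gg S q₁ q₂) t, wMul_val hS hq1' hq2' hcomp']
  refine Prod.ext ?_ ?_
  · exact val1_of hm
  · show mulChar Gg S (wMul Gg S q₁ q₂).val.2 t = (wActR Gg S q₂ t).val.2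
    rw [val2_of hm, val2_of (wActR_val (q := q₂) t)]

lemma w_spec_d (hS : NiceS Gg S) (q₁ q₂ : actGpd Gg S) (t : sHat Gg S)
    (hqs : wS Gg S q₁ = wR Gg S q₂)
    (ht : pChar Gg S t = pChar Gg S (wR Gg S q₁)) :
    wActL Gg S t (wMul Gg S q₁ q₂) =
      wMul Gg S (wActL Gg S t q₁) (wActL Gg S (wRho Gg S q₁ t) q₂) := by
  have h1 := (hwRep_spec q₁).1
  have h2 := (hwRep_spec q₂).1
  have hc := rep_comp hS h1 h2 hqs
  have ht2 : t.val.1 = (wR Gg S q₁).val.1 := ht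
  have hm := wMul_val hS h1 h2 hqs
  have hqL1 : (wActL Gg S t q₁).val.1 = cls Gg S (hwRep Gg S q₁) :=
    (congrArg Prod.fst (wActL_val hS h1 t)).trans h1
  have hq2' : (wActL Gg S (wRho Gg S q₁ t) q₂).val.1 = cls Gg S (hwRep Gg S q₂) :=
    (congrArg Prod.fst (wActL_val hS h2 (wRho Gg S q₁ t))).trans h2
  have hcomp' : wS Gg S (wActL Gg S t q₁) = wR Gg S (wActL Gg S (wRho Gg S q₁ t) q₂) := by
    show (wActL Gg S t q₁).val.2 = _
    rw [congrArg Prod.snd (wActL_val hS h1 t), wR_eq hS hq2',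
      congrArg Prod.snd (wActL_val hS h2 (wRho Gg S q₁ t)), wRho_eq hS h1 t,
      adChar_mul hS (Gg.inv (hwRep Gg S q₂))
        (adChar Gg S (hwRep Gg S q₂) (adChar Gg S (hwRep Gg S q₁) t)) q₂.val.2
        (by rw [p_adChar hS]; exact (fib_eq_s hS h2).symm),
      adChar_comp hS (by rw [Gg.r_inv]) (adChar Gg S (hwRep Gg S q₁) t), Gg.mul_inv,
      adChar_unit hS (adChar Gg S (hwRep Gg S q₁) t) (by rw [p_adChar hS]; exact hc),
      ← wR_eq hS h2, ← hqs]
    rfl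
  apply Subtype.ext
  rw [wActL_val hS (congrArg Prod.fst hm) t, wMul_val hS hqL1 hq2' hcomp']
  refine Prod.ext ?_ ?_
  · exact val1_of hm
  · show mulChar Gg S (adChar Gg S (Gg.mul (hwRep Gg S q₁) (hwRep Gg S q₂)) t)
      (wMul Gg S q₁ q₂).val.2 = (wActL Gg S (wRho Gg S q₁ t) q₂).val.2
    rw [val2_of hm, val2_of (wActL_val hS h2 (wRho Gg S q₁ t)),
      wRho_eq hS h1 t, ← adChar_comp hS hc t]

lemma w_spec_e (hS : NiceS Gg S) (q : actGpd Gg S) (t : sHat Gg S)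
    (ht : pChar Gg S t = pChar Gg S (wS Gg S q)) :
    wInv Gg S (wActR Gg S q t) = wActL Gg S t (wInv Gg S q) := by
  have h1 := (hwRep_spec q).1
  have ht2 : t.val.1 = q.val.2.val.1 := ht
  have hqR : (wActR Gg S q t).val.1 = cls Gg S (hwRep Gg S q) :=
    (congrArg Prod.fst (wActR_val (q := q) t)).trans h1
  have hInvQ : (wInv Gg S q).val.1 = cls Gg S (Gg.inv (hwRep Gg S q)) :=
    congrArg Prod.fst (wInv_val hS h1)
  apply Subtype.ext
  rw [wInv_val hS hqR, wActL_val hS hInvQ t]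
  refine Prod.ext hInvQ.symm ?_
  rw [wR_eq hS hqR, congrArg Prod.snd (wActR_val (q := q) t),
    adChar_mul hS (Gg.inv (hwRep Gg S q)) q.val.2 t ht2.symm, ← wR_eq hS h1,
    congrArg Prod.snd (wInv_val hS h1)]
  exact mulChar_comm hS _ _ (by rw [p_wR hS h1, p_adChar hS, Gg.s_inv])

lemma w_spec_f (hS : NiceS Gg S) (q : actGpd Gg S) (t : sHat Gg S)
    (ht : pChar Gg S t = pChar Gg S (wR Gg S q)) :
    wInv Gg S (wActL Gg S t q) = wActR Gg S (wInv Gg S q) t := by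
  have h1 := (hwRep_spec q).1
  have ht2 : t.val.1 = (wR Gg S q).val.1 := ht
  have ht' : t.val.1 = Gg.r (hwRep Gg S q) := ht2.trans (p_wR hS h1)
  have hqL : (wActL Gg S t q).val.1 = cls Gg S (hwRep Gg S q) :=
    (congrArg Prod.fst (wActL_val hS h1 t)).trans h1
  have hInvQ : (wInv Gg S q).val.1 = cls Gg S (Gg.inv (hwRep Gg S q)) :=
    congrArg Prod.fst (wInv_val hS h1)
  apply Subtype.ext
  rw [wInv_val hS hqL, wActR_val (q := wInv Gg S q) t]
  refine Prod.ext hInvQ.symm ?_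
  rw [wR_actL hS h1 t ht', congrArg Prod.snd (wInv_val hS h1)]
  exact mulChar_comm hS t _ (by rw [p_wR hS h1]; exact ht')

end Lemmas

/-- Proposition 5.3 (algebraic part, trivial 2-cocycle): let `G` be a groupoid and
`S ⊆ Iso(G)` a wide normal subgroupoid with abelian isotropy fibres.  Then
(i) `Ad_γ(t̂)(a) = t̂(γaγ⁻¹)` (and likewise `([γ].x)(a) = x(γ⁻¹aγ)`) depends only on the class
`[γ] ∈ G/S`; and (ii)–(iii) the action groupoid `H = (G/S) ⋉ Ŝ`, with unit space `T = Ŝ`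
fibred over `X = G⁰`, the left action `t̂ ▶ ([γ],x) = ([γ], Ad_γ(t̂)·x)`, the right action
`([γ],x) ◀ t̂ = ([γ], x·t̂)`, and `λ_{([γ],x)} = Ad_{γ⁻¹}`, `ρ_{([γ],x)} = Ad_γ`, satisfies all
the algebraic conditions of Assumption 5.1 (commuting free actions along `p∘r` and `p∘s`
satisfying (1a), (1b) and (2a)–(2f)). -/
theorem prop53 (Gg : RawGroupoid Hm U) (S : Set Hm)
    (hSiso : ∀ a ∈ S, Gg.r a = Gg.s a)
    (hSwide : ∀ x : U, Gg.unit x ∈ S)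
    (hSmul : ∀ a b, a ∈ S → b ∈ S → Gg.s a = Gg.r b → Gg.mul a b ∈ S)
    (hSinv : ∀ a ∈ S, Gg.inv a ∈ S)
    (hSnormal : ∀ γ a, a ∈ S → Gg.r a = Gg.r γ →
      Gg.mul (Gg.mul (Gg.inv γ) a) γ ∈ S)
    (hSab : ∀ a b, a ∈ S → b ∈ S → Gg.s a = Gg.r b → Gg.r a = Gg.s b →
      Gg.mul a b = Gg.mul b a) :
    -- (i) `Ad_γ` and `[γ].(−)` depend only on the class of `γ` in `G/S`
    (∀ γ γ' : Hm, γ' ∈ cls Gg S γ → ∀ χ : Hm → Circle,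
        adFun Gg S γ χ = adFun Gg S γ' χ ∧ dotFun Gg S γ χ = dotFun Gg S γ' χ) ∧
    -- (ii), (iii): `(H, T) = ((G/S) ⋉ Ŝ, Ŝ)` with the data above satisfies Assumption 5.1
    (∃ A : Assumption51 (actGpd Gg S) (sHat Gg S) U,
        A.gpd.r = wR Gg S ∧
        A.gpd.s = wS Gg S ∧
        A.gpd.mul = wMul Gg S ∧
        A.gpd.inv = wInv Gg S ∧
        A.gpd.unit = wUnit Gg S ∧
        A.bund.p = pChar Gg S ∧
        A.bund.e = eChar Gg S ∧
        A.bund.bmul = mulChar Gg S ∧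
        A.bund.binv = invChar Gg S ∧
        A.actL = wActL Gg S ∧
        A.actR = wActR Gg S ∧
        A.lam = wLam Gg S ∧
        A.rho = wRho Gg S) := by
  have hS : NiceS Gg S := ⟨hSiso, hSwide, hSmul, hSinv, hSnormal, hSab⟩
  constructor
  · intro γ γ' hmem χ
    constructor
    · exact (adFun_cls hS hmem χ).symm
    · rw [dotFun_eq_adFun, dotFun_eq_adFun,
        adFun_cls hS (inv_mem_cls hS hmem) χ]
  · refine ⟨{
      gpd := {
        r := wR Gg S
        s := wS Gg S
        mul := wMul Gg S
        inv := wInv Gg S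
        unit := wUnit Gg S
        r_unit := w_r_unit hS
        s_unit := fun _ => rfl
        r_mul := w_r_mul hS
        s_mul := w_s_mul hS
        r_inv := w_r_inv hS
        s_inv := w_s_inv hS
        inv_inv := w_inv_inv hS
        mul_assoc := w_mul_assoc hS
        unit_mul := w_unit_mul hS
        mul_unit := w_mul_unit hS
        inv_mul := w_inv_mul hS
        mul_inv := w_mul_inv hS }
      bund := {
        p := pChar Gg S
        p_surj := fun u => ⟨eChar Gg S u, rfl⟩
        e := eChar Gg S
        bmul := mulChar Gg S
        binv := invChar Gg S
        p_e := fun _ => rfl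
        p_bmul := fun s t h => (p_mulChar_left s t).trans h
        p_binv := fun t => p_invChar t
        bmul_assoc := fun s t u h1 h2 => mulChar_assoc hS s t u h1 h2
        bmul_comm := fun s t h => mulChar_comm hS s t h
        e_bmul := fun t => mulChar_e_left hS t
        binv_bmul := fun t => mulChar_inv_left hS t }
      actL := wActL Gg S
      actR := wActR Gg S
      lam := wLam Gg S
      rho := wRho Gg S
      actL_id := w_actL_id hS
      actL_mul := w_actL_mul hS
      pr_actL := w_pr_actL hS
      actL_free := w_actL_free hS
      actR_id := w_actR_id hS
      actR_mul := w_actR_mul hS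
      ps_actR := w_ps_actR hS
      actR_free := w_actR_free hS
      act_comm := w_act_comm hS
      unit_act := w_unit_act hS
      r_actL := w_r_actL hS
      s_actR := w_s_actR hS
      lam_p := fun η t _ => w_lam_p hS η t
      rho_p := fun η t _ => w_rho_p hS η t
      spec_a := w_spec_a hS
      spec_b := w_spec_b hS
      spec_c := w_spec_c hS
      spec_d := w_spec_d hS
      spec_e := w_spec_e hS
      spec_f := w_spec_f hS },
      rfl, rfl, rfl, rfl, rfl, rfl, rfl, rfl, rfl, rfl, rfl, rfl, rfl⟩

end WeylConstruction
end
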